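/- arXiv:1601.05638 — 6 statements merged into one kernel-verified Lean document; each statement's English description precedes it below -/
import Mathlib

section
/- Let N be a positive integer, Δ > 0 a real number, and L = NΔ. For all Ω, Ω' ∈ [−1, 1], the sum I₁(Ω,Ω') = ∑_{k=0}^{N−1} f_{L,Δ}(k/L − Ω) · conj(f_{L,Δ}(k/L − Ω')) equals f_{L,Δ}(Ω' − Ω); in particular |I₁(Ω,Ω')| ≤ 1. -/
open Complex Finset

/-- `f_{L,Δ}(Ω) = (Δ/L) ∑_{n=0}^{N-1} exp(-2π i n Δ Ω)` with `L = N Δ`. -/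
noncomputable def fLD (N : ℕ) (Δ : ℝ) (Ω : ℝ) : ℂ :=
  ((Δ / ((N : ℝ) * Δ) : ℝ) : ℂ) *
    ∑ n ∈ Finset.range N,
      Complex.exp ((-2 : ℂ) * (Real.pi : ℂ) * Complex.I * (n : ℂ) * (Δ : ℂ) * (Ω : ℂ))

lemma orth (N : ℕ) (hN : 0 < N) (n m : ℕ) (hn : n < N) (hm : m < N) :
    ∑ k ∈ Finset.range N, Complex.exp (2 * (Real.pi : ℂ) * Complex.I * ((m : ℂ) - (n : ℂ)) * (k : ℂ) / (N : ℂ)) =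
      if n = m then (N : ℂ) else 0 := by
  have hNC : (N : ℂ) ≠ 0 := Nat.cast_ne_zero.mpr hN.ne'
  set ζ : ℂ := Complex.exp (2 * (Real.pi : ℂ) * Complex.I * ((m : ℂ) - (n : ℂ)) / (N : ℂ)) with hζ
  have hpow : ∀ k : ℕ, Complex.exp (2 * (Real.pi : ℂ) * Complex.I * ((m : ℂ) - (n : ℂ)) * (k : ℂ) / (N : ℂ)) = ζ ^ k := by
    intro k
    rw [hζ, ← Complex.exp_nat_mul]
    ring_nf
  simp_rw [hpow]
  by_cases h : n = m
  · subst h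
    simp [hζ]
  · rw [if_neg h]
    have hζN : ζ ^ N = 1 := by
      rw [hζ, ← Complex.exp_nat_mul]
      have : (N : ℂ) * (2 * (Real.pi : ℂ) * Complex.I * ((m : ℂ) - (n : ℂ)) / (N : ℂ)) =
          (((m : ℤ) - (n : ℤ) : ℤ) : ℂ) * (2 * (Real.pi : ℂ) * Complex.I) := by
        push_cast
        field_simp
      rw [this, Complex.exp_int_mul_two_pi_mul_I]
    have hζ1 : ζ ≠ 1 := by
      rw [hζ]
      intro h1
      rw [Complex.exp_eq_one_iff] at h1
      obtain ⟨j, hj⟩ := h1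
      have h2 : (2 : ℂ) * Real.pi * Complex.I ≠ 0 := by
        simp [Real.pi_ne_zero, Complex.I_ne_zero]
      have : ((m : ℂ) - (n : ℂ)) = (j : ℂ) * (N : ℂ) := by
        field_simp at hj
        apply mul_left_cancel₀ h2
        rw [hj]; ring
      have hint : (m : ℤ) - (n : ℤ) = j * N := by exact_mod_cast this
      have habs : |(m : ℤ) - (n : ℤ)| < N := by
        rw [abs_sub_lt_iff]
        omega
      have hne : (m : ℤ) - (n : ℤ) ≠ 0 := by omega
      rw [hint] at habs hne
      rcases lt_trichotomy j 0 with hj0 | hj0 | hj0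
      · have : (j : ℤ) * N ≤ -N := by nlinarith [(by exact_mod_cast hN : (0:ℤ) < (N:ℤ))]
        rw [abs_lt] at habs; omega
      · simp [hj0] at hne
      · have : (N : ℤ) ≤ j * N := by nlinarith [(by exact_mod_cast hN : (0:ℤ) < (N:ℤ))]
        rw [abs_lt] at habs; omega
    calc ∑ k ∈ Finset.range N, ζ ^ k = (ζ ^ N - 1) / (ζ - 1) := geom_sum_eq hζ1 N
    _ = 0 := by rw [hζN]; simp

lemma fLD_eq (N : ℕ) (hN : 0 < N) (Δ : ℝ) (hΔ : Δ ≠ 0) (x : ℝ) :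
    fLD N Δ x = ((N : ℂ))⁻¹ *
      ∑ n ∈ Finset.range N,
        Complex.exp ((-2 : ℂ) * (Real.pi : ℂ) * Complex.I * (n : ℂ) * (Δ : ℂ) * (x : ℂ)) := by
  unfold fLD
  congr 1
  have hNC : (N : ℂ) ≠ 0 := Nat.cast_ne_zero.mpr hN.ne'
  have hΔC : (Δ : ℂ) ≠ 0 := Complex.ofReal_ne_zero.mpr hΔ
  push_cast
  field_simp

lemma abs_fLD_le (N : ℕ) (hN : 0 < N) (Δ : ℝ) (hΔ : Δ ≠ 0) (x : ℝ) :
    ‖fLD N Δ x‖ ≤ 1 := by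
  have hNR : (0:ℝ) < (N : ℝ) := Nat.cast_pos.mpr hN
  rw [fLD_eq N hN Δ hΔ, norm_mul]
  have h1 : ∀ n : ℕ,
      ‖Complex.exp ((-2 : ℂ) * (Real.pi : ℂ) * Complex.I * (n : ℂ) * (Δ : ℂ) * (x : ℂ))‖ = 1 := by
    intro n
    have : ((-2 : ℂ) * (Real.pi : ℂ) * Complex.I * (n : ℂ) * (Δ : ℂ) * (x : ℂ)) =
        (((-2) * Real.pi * n * Δ * x : ℝ) : ℂ) * Complex.I := by push_cast; ring
    rw [this, Complex.norm_exp_ofReal_mul_I]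
  calc ‖((N:ℂ))⁻¹‖ * ‖∑ n ∈ Finset.range N,
        Complex.exp ((-2 : ℂ) * (Real.pi : ℂ) * Complex.I * (n : ℂ) * (Δ : ℂ) * (x : ℂ))‖
      ≤ ‖((N:ℂ))⁻¹‖ * ∑ n ∈ Finset.range N, (1:ℝ) := by
        apply mul_le_mul_of_nonneg_left _ (norm_nonneg _)
        refine le_trans (norm_sum_le _ _) ?_
        apply Finset.sum_le_sum
        intro n _
        rw [h1 n]
    _ = 1 := by
        rw [norm_inv, Complex.norm_natCast, Finset.sum_const, Finset.card_range, nsmul_eq_mul,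
          mul_one, inv_mul_cancel₀ hNR.ne']


/-- For `L = N Δ` and `Ω, Ω' ∈ [-1,1]`, the sum
`I₁(Ω,Ω') = ∑_{k=0}^{N-1} f_{L,Δ}(k/L - Ω) conj(f_{L,Δ}(k/L - Ω'))` equals
`f_{L,Δ}(Ω' - Ω)`; in particular `|I₁(Ω,Ω')| ≤ 1`. -/
theorem I1_eq_and_bound (N : ℕ) (hN : 0 < N) (Δ : ℝ) (hΔ : 0 < Δ)
    (Ω Ω' : ℝ) (hΩ : Ω ∈ Set.Icc (-1 : ℝ) 1) (hΩ' : Ω' ∈ Set.Icc (-1 : ℝ) 1) :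
    (∑ k ∈ Finset.range N,
        fLD N Δ ((k : ℝ) / ((N : ℝ) * Δ) - Ω) *
          (starRingEnd ℂ) (fLD N Δ ((k : ℝ) / ((N : ℝ) * Δ) - Ω'))) =
      fLD N Δ (Ω' - Ω) ∧
    ‖(∑ k ∈ Finset.range N,
        fLD N Δ ((k : ℝ) / ((N : ℝ) * Δ) - Ω) *
          (starRingEnd ℂ) (fLD N Δ ((k : ℝ) / ((N : ℝ) * Δ) - Ω')))‖ ≤ 1 := by
  have hΔ0 : Δ ≠ 0 := hΔ.ne'
  have hNC : (N : ℂ) ≠ 0 := Nat.cast_ne_zero.mpr hN.ne'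
  have hNR : (N : ℝ) ≠ 0 := Nat.cast_ne_zero.mpr hN.ne'
  have hconj : ∀ (m : ℕ) (x : ℝ),
      (starRingEnd ℂ) (Complex.exp ((-2 : ℂ) * (Real.pi : ℂ) * Complex.I * (m : ℂ) * (Δ : ℂ) * (x : ℂ))) =
      Complex.exp ((2 : ℂ) * (Real.pi : ℂ) * Complex.I * (m : ℂ) * (Δ : ℂ) * (x : ℂ)) := by
    intro m x
    rw [← Complex.exp_conj]
    congr 1
    simp only [map_mul, map_neg, map_ofNat, Complex.conj_I, Complex.conj_ofReal,
      Complex.conj_natCast]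
    ring
  have expand : ∀ k : ℕ,
      fLD N Δ ((k : ℝ) / ((N : ℝ) * Δ) - Ω) *
          (starRingEnd ℂ) (fLD N Δ ((k : ℝ) / ((N : ℝ) * Δ) - Ω')) =
      (N:ℂ)⁻¹ * (N:ℂ)⁻¹ * ∑ n ∈ Finset.range N, ∑ m ∈ Finset.range N,
        Complex.exp ((2:ℂ) * (Real.pi:ℂ) * Complex.I * (n:ℂ) * (Δ:ℂ) * (Ω:ℂ)
            - (2:ℂ) * (Real.pi:ℂ) * Complex.I * (m:ℂ) * (Δ:ℂ) * (Ω':ℂ)) *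
          Complex.exp (2 * (Real.pi : ℂ) * Complex.I * ((m : ℂ) - (n : ℂ)) * (k : ℂ) / (N : ℂ)) := by
    intro k
    rw [fLD_eq N hN Δ hΔ0, fLD_eq N hN Δ hΔ0, map_mul, map_sum]
    simp_rw [hconj]
    rw [show ((starRingEnd ℂ) ((N:ℂ)⁻¹)) = (N:ℂ)⁻¹ by simp]
    rw [mul_mul_mul_comm, Finset.sum_mul_sum]
    congr 1
    apply Finset.sum_congr rfl
    intro n _
    apply Finset.sum_congr rfl
    intro m _
    rw [← Complex.exp_add, ← Complex.exp_add]
    have hΔC : (Δ : ℂ) ≠ 0 := Complex.ofReal_ne_zero.mpr hΔ0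
    congr 1
    push_cast
    field_simp [hΔC, hNC]
    ring
  have key : (∑ k ∈ Finset.range N,
        fLD N Δ ((k : ℝ) / ((N : ℝ) * Δ) - Ω) *
          (starRingEnd ℂ) (fLD N Δ ((k : ℝ) / ((N : ℝ) * Δ) - Ω'))) = fLD N Δ (Ω' - Ω) := by
    calc (∑ k ∈ Finset.range N,
        fLD N Δ ((k : ℝ) / ((N : ℝ) * Δ) - Ω) *
          (starRingEnd ℂ) (fLD N Δ ((k : ℝ) / ((N : ℝ) * Δ) - Ω')))
        = (N:ℂ)⁻¹ * (N:ℂ)⁻¹ * ∑ n ∈ Finset.range N, ∑ m ∈ Finset.range N,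
            Complex.exp ((2:ℂ) * (Real.pi:ℂ) * Complex.I * (n:ℂ) * (Δ:ℂ) * (Ω:ℂ)
                - (2:ℂ) * (Real.pi:ℂ) * Complex.I * (m:ℂ) * (Δ:ℂ) * (Ω':ℂ)) *
              ∑ k ∈ Finset.range N,
                Complex.exp (2 * (Real.pi : ℂ) * Complex.I * ((m : ℂ) - (n : ℂ)) * (k : ℂ) / (N : ℂ)) := by
          simp_rw [expand, ← Finset.mul_sum]
          congr 1
          rw [Finset.sum_comm]
          apply Finset.sum_congr rfl
          intro n _
          rw [Finset.sum_comm]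
          apply Finset.sum_congr rfl
          intro m _
          rw [Finset.mul_sum]
      _ = (N:ℂ)⁻¹ * (N:ℂ)⁻¹ * ∑ n ∈ Finset.range N, ∑ m ∈ Finset.range N,
            Complex.exp ((2:ℂ) * (Real.pi:ℂ) * Complex.I * (n:ℂ) * (Δ:ℂ) * (Ω:ℂ)
                - (2:ℂ) * (Real.pi:ℂ) * Complex.I * (m:ℂ) * (Δ:ℂ) * (Ω':ℂ)) *
              (if n = m then (N:ℂ) else 0) := by
          congr 1
          apply Finset.sum_congr rfl
          intro n hn
          apply Finset.sum_congr rfl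
          intro m hm
          rw [orth N hN n m (Finset.mem_range.mp hn) (Finset.mem_range.mp hm)]
      _ = (N:ℂ)⁻¹ * (N:ℂ)⁻¹ * ∑ n ∈ Finset.range N,
            Complex.exp ((2:ℂ) * (Real.pi:ℂ) * Complex.I * (n:ℂ) * (Δ:ℂ) * (Ω:ℂ)
                - (2:ℂ) * (Real.pi:ℂ) * Complex.I * (n:ℂ) * (Δ:ℂ) * (Ω':ℂ)) * (N:ℂ) := by
          congr 1
          apply Finset.sum_congr rfl
          intro n hn
          simp_rw [mul_ite, mul_zero]
          rw [Finset.sum_ite_eq]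
          simp [hn]
      _ = fLD N Δ (Ω' - Ω) := by
          rw [fLD_eq N hN Δ hΔ0]
          rw [← Finset.sum_mul]
          rw [show (N:ℂ)⁻¹ * (N:ℂ)⁻¹ * ((∑ n ∈ Finset.range N,
            Complex.exp ((2:ℂ) * (Real.pi:ℂ) * Complex.I * (n:ℂ) * (Δ:ℂ) * (Ω:ℂ)
                - (2:ℂ) * (Real.pi:ℂ) * Complex.I * (n:ℂ) * (Δ:ℂ) * (Ω':ℂ))) * (N:ℂ)) =
            (N:ℂ)⁻¹ * (∑ n ∈ Finset.range N,
            Complex.exp ((2:ℂ) * (Real.pi:ℂ) * Complex.I * (n:ℂ) * (Δ:ℂ) * (Ω:ℂ)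
                - (2:ℂ) * (Real.pi:ℂ) * Complex.I * (n:ℂ) * (Δ:ℂ) * (Ω':ℂ))) by
              rw [mul_comm _ (N:ℂ), ← mul_assoc, mul_assoc ((N:ℂ)⁻¹) _ (N:ℂ), inv_mul_cancel₀ hNC, mul_one]]
          congr 1
          apply Finset.sum_congr rfl
          intro n _
          congr 1
          push_cast
          ring
  refine ⟨key, ?_⟩
  rw [key]
  exact abs_fLD_le N hN Δ hΔ0 _
end

section
/- For every positive integer n, the partial sum of the Basel series satisfies the strict two-sided bound (π²/6) · 2n(2n−1)/(2n+1)² < ∑_{k=1}^{n} 1/k² < (π²/6) · 2n(2n+2)/(2n+1)². -/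
open Finset

/-- Telescoping sum: `∑_{i=0}^∞ 1/((i+a)(i+a+1)) = 1/a` for `a > 0`. -/
lemma telescope_hasSum (a : ℕ) (ha : 0 < a) :
    HasSum (fun i : ℕ => 1 / (((i : ℝ) + a) * ((i : ℝ) + a + 1))) (1 / a) := by
  have ha' : (0 : ℝ) < a := by exact_mod_cast ha
  have hterm : ∀ i : ℕ, 1 / (((i : ℝ) + a) * ((i : ℝ) + a + 1))
      = 1 / ((i : ℝ) + a) - 1 / ((i : ℝ) + a + 1) := by
    intro i
    have h1 : (0 : ℝ) < (i : ℝ) + a := by positivity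
    have h2 : (0 : ℝ) < (i : ℝ) + a + 1 := by positivity
    field_simp
    ring
  have hnonneg : ∀ i : ℕ, 0 ≤ 1 / (((i : ℝ) + a) * ((i : ℝ) + a + 1)) := by
    intro i; positivity
  rw [hasSum_iff_tendsto_nat_of_nonneg hnonneg]
  have hsum : ∀ m : ℕ, ∑ i ∈ Finset.range m, 1 / (((i : ℝ) + a) * ((i : ℝ) + a + 1))
      = 1 / a - 1 / ((m : ℝ) + a) := by
    intro m
    induction m with
    | zero => simp
    | succ m ih =>
        rw [Finset.sum_range_succ, ih, hterm]
        push_cast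
        ring
  simp only [hsum]
  have h1 : Filter.Tendsto (fun m : ℕ => ((m : ℝ) + a)) Filter.atTop Filter.atTop :=
    Filter.tendsto_atTop_add_const_right _ _ tendsto_natCast_atTop_atTop
  have h2 : Filter.Tendsto (fun m : ℕ => 1 / ((m : ℝ) + a)) Filter.atTop (nhds 0) := by
    simpa [one_div, Function.comp_def] using tendsto_inv_atTop_zero.comp h1
  simpa using (tendsto_const_nhds.sub h2)

set_option maxHeartbeats 1000000 in
/-- Two-sided strict bound on the partial sums of the Basel
series: `(π²/6)·2n(2n-1)/(2n+1)² < ∑_{k=1}^n 1/k² < (π²/6)·2n(2n+2)/(2n+1)²`. -/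
theorem basel_partial_sum_bounds (n : ℕ) (hn : 0 < n) :
    Real.pi ^ 2 / 6 * (2 * (n : ℝ) * (2 * (n : ℝ) - 1) / (2 * (n : ℝ) + 1) ^ 2) <
        ∑ k ∈ Finset.Icc 1 n, (1 : ℝ) / (k : ℝ) ^ 2 ∧
      ∑ k ∈ Finset.Icc 1 n, (1 : ℝ) / (k : ℝ) ^ 2 <
        Real.pi ^ 2 / 6 * (2 * (n : ℝ) * (2 * (n : ℝ) + 2) / (2 * (n : ℝ) + 1) ^ 2) := by
  have hbasel := hasSum_zeta_two
  have hsummable := hbasel.summable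
  -- split off the first n+1 terms
  have hsplit := Summable.sum_add_tsum_nat_add (n + 1) hsummable
  rw [hbasel.tsum_eq] at hsplit
  -- the finite part equals the Icc sum
  have hfin : ∑ i ∈ Finset.range (n + 1), (1 : ℝ) / (i : ℝ) ^ 2
      = ∑ k ∈ Finset.Icc 1 n, (1 : ℝ) / (k : ℝ) ^ 2 := by
    rw [Finset.range_eq_Ico, ← Finset.Ico_add_one_right_eq_Icc]
    rw [show Finset.Ico 0 (n + 1) = insert 0 (Finset.Ico 1 (n + 1)) by
      ext x; simp [Finset.mem_Ico, Finset.mem_insert]; omega]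
    rw [Finset.sum_insert (by simp)]
    simp [Finset.Ico_add_one_right_eq_Icc]
  set S := ∑ k ∈ Finset.Icc 1 n, (1 : ℝ) / (k : ℝ) ^ 2 with hS
  set T := ∑' i : ℕ, (1 : ℝ) / ((i : ℝ) + (n + 1)) ^ 2 with hT
  have hTeq : T = ∑' i : ℕ, (1 : ℝ) / ((i + (n + 1) : ℕ) : ℝ) ^ 2 := by
    rw [hT]; congr 1; ext i; push_cast; ring_nf
  have hsplit' : S + T = Real.pi ^ 2 / 6 := by
    rw [← hfin, hTeq]; exact hsplit
  -- tail summability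
  have hTsummable : Summable (fun i : ℕ => (1 : ℝ) / ((i : ℝ) + (n + 1)) ^ 2) := by
    have := (summable_nat_add_iff (n + 1)).mpr hsummable
    apply this.congr
    intro i; push_cast; ring_nf
  -- upper bound on tail: T < 1/n
  have hTub : T < 1 / n := by
    have hcomp := telescope_hasSum n hn
    rw [hT, ← hcomp.tsum_eq]
    apply Summable.tsum_lt_tsum_of_nonneg (i := 0)
    · intro b; positivity
    · intro b
      have hb1 : (0 : ℝ) < (b : ℝ) + n := by
        have : (0:ℝ) < (n:ℝ) := by exact_mod_cast hn
        positivity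
      rw [div_le_div_iff₀ (by positivity) (by positivity)]
      nlinarith
    · have hn' : (0:ℝ) < (n:ℝ) := by exact_mod_cast hn
      rw [div_lt_div_iff₀ (by positivity) (by positivity)]
      nlinarith
    · exact hcomp.summable
  -- lower bound on tail: 1/(n+1) < T
  have hTlb : 1 / ((n : ℝ) + 1) < T := by
    have hcomp := telescope_hasSum (n + 1) (by omega)
    have h1 : (1 : ℝ) / ((n : ℕ) + 1 : ℕ) = 1 / ((n : ℝ) + 1) := by push_cast; ring
    rw [← h1, ← hcomp.tsum_eq, hT]
    apply Summable.tsum_lt_tsum_of_nonneg (i := 0)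
    · intro b; positivity
    · intro b
      have hb1 : (0 : ℝ) < (b : ℝ) + ((n : ℕ) + 1 : ℕ) := by positivity
      push_cast
      rw [div_le_div_iff₀ (by positivity) (by positivity)]
      nlinarith
    · push_cast
      rw [div_lt_div_iff₀ (by positivity) (by positivity)]
      nlinarith
    · exact hTsummable
  -- numeric bounds on π²
  have hpi_lo : (3.14159 : ℝ) < Real.pi := by
    have := Real.pi_gt_d6; linarith
  have hpi_hi : Real.pi < 3.1416 := by
    have := Real.pi_lt_d6; linarith
  have hpisq_lo : (9.8695 : ℝ) < Real.pi ^ 2 := by nlinarith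
  have hpisq_hi : Real.pi ^ 2 < 9.87 := by nlinarith [Real.pi_gt_d6, Real.pi_pos]
  have hn' : (1 : ℝ) ≤ (n : ℝ) := by exact_mod_cast hn
  have hSeq : S = Real.pi ^ 2 / 6 - T := by linarith
  have hnpos : (0 : ℝ) < (n : ℝ) := by exact_mod_cast hn
  have hBpos : (0 : ℝ) < 6 * (2 * (n : ℝ) + 1) ^ 2 := by positivity
  have hne : (2 * (n : ℝ) + 1) ≠ 0 := by positivity
  have t1 : T * (n : ℝ) < 1 := (lt_div_iff₀ hnpos).mp hTub
  have t2 : 1 < T * ((n : ℝ) + 1) := (div_lt_iff₀ (by positivity)).mp hTlb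
  rw [hSeq]
  clear_value T S
  clear hsplit hfin hS hT hTeq hsplit' hTsummable hTub hTlb hbasel hsummable hSeq
  have e1 : Real.pi ^ 2 / 6 * (2 * (n : ℝ) * (2 * (n : ℝ) - 1) / (2 * (n : ℝ) + 1) ^ 2)
      = Real.pi ^ 2 * (2 * (n : ℝ) * (2 * (n : ℝ) - 1)) / (6 * (2 * (n : ℝ) + 1) ^ 2) := by
    field_simp
  have e2 : Real.pi ^ 2 / 6 * (2 * (n : ℝ) * (2 * (n : ℝ) + 2) / (2 * (n : ℝ) + 1) ^ 2)
      = Real.pi ^ 2 * (2 * (n : ℝ) * (2 * (n : ℝ) + 2)) / (6 * (2 * (n : ℝ) + 1) ^ 2) := by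
    field_simp
  constructor
  · -- lower bound
    have hnum : 6 * (2 * (n : ℝ) + 1) ^ 2 ≤ Real.pi ^ 2 * (6 * n + 1) * n := by
      nlinarith [hpisq_lo, hn']
    have h3 := mul_lt_mul_of_pos_right t1 hBpos
    have hgoal : 6 * T * (2 * (n : ℝ) + 1) ^ 2 < Real.pi ^ 2 * (6 * n + 1) := by
      nlinarith [h3, hnum, hnpos]
    rw [e1, div_lt_iff₀ hBpos]
    linarith [hgoal]
  · -- upper bound
    have hnum2 : Real.pi ^ 2 * ((n : ℝ) + 1) < 6 * (2 * (n : ℝ) + 1) ^ 2 := by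
      nlinarith [hpisq_hi, hn']
    have h4 := mul_lt_mul_of_pos_right t2 hBpos
    have hgoal2 : Real.pi ^ 2 < 6 * T * (2 * (n : ℝ) + 1) ^ 2 := by
      nlinarith [h4, hnum2, hnpos]
    rw [e2, lt_div_iff₀ hBpos]
    linarith [hgoal2]
end

section
/- For every natural number n and every real x with sin x ≠ 0, the identity sin((2n+1)x)/(sin x)^{2n+1} = ∑_{r=0}^{n} (−1)^r · C(2n+1, 2r+1) · (cot x)^{2(n−r)} holds, where C(·,·) denotes the binomial coefficient and cot x = cos x / sin x. -/
open Finset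

lemma im_I_pow_odd (r : ℕ) : (Complex.I ^ (2 * r + 1)).im = (-1 : ℝ) ^ r := by
  have h : Complex.I ^ (2 * r + 1) = (((-1 : ℝ) ^ r : ℝ) : ℂ) * Complex.I := by
    rw [pow_add, pow_mul, Complex.I_sq, pow_one]
    norm_cast
  rw [h, Complex.im_ofReal_mul, Complex.I_im, mul_one]

lemma im_I_pow_even (r : ℕ) : (Complex.I ^ (2 * r)).im = 0 := by
  have h : Complex.I ^ (2 * r) = (((-1 : ℝ) ^ r : ℝ) : ℂ) := by
    rw [pow_mul, Complex.I_sq]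
    norm_cast
  rw [h, Complex.ofReal_im]

lemma sin_odd_key (n : ℕ) (x : ℝ) :
    Real.sin ((2 * (n : ℝ) + 1) * x) =
      ∑ r ∈ Finset.range (n + 1),
        (-1 : ℝ) ^ r * (Nat.choose (2 * n + 1) (2 * r + 1) : ℝ) *
          Real.cos x ^ (2 * (n - r)) * Real.sin x ^ (2 * r + 1) := by
  have h1 : ((Real.sin x : ℂ) * Complex.I + (Real.cos x : ℂ)) ^ (2 * n + 1)
      = Complex.cos (((2 * (n : ℝ) + 1) * x : ℝ) : ℂ)
        + Complex.sin (((2 * (n : ℝ) + 1) * x : ℝ) : ℂ) * Complex.I := by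
    rw [add_comm, Complex.ofReal_sin, Complex.ofReal_cos, Complex.cos_add_sin_I,
      Complex.cos_add_sin_I, ← Complex.exp_nat_mul]
    congr 1
    push_cast
    ring
  rw [add_pow] at h1
  have h2 := congrArg Complex.im h1
  rw [Complex.im_sum] at h2
  have hterm : ∀ k, (((Real.sin x : ℂ) * Complex.I) ^ k * (Real.cos x : ℂ) ^ (2 * n + 1 - k)
      * ((2 * n + 1).choose k : ℂ)).im
      = (Real.sin x ^ k * Real.cos x ^ (2 * n + 1 - k) * ((2 * n + 1).choose k : ℝ))
          * (Complex.I ^ k).im := by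
    intro k
    have : ((Real.sin x : ℂ) * Complex.I) ^ k * (Real.cos x : ℂ) ^ (2 * n + 1 - k)
        * ((2 * n + 1).choose k : ℂ)
        = ((Real.sin x ^ k * Real.cos x ^ (2 * n + 1 - k)
            * ((2 * n + 1).choose k : ℝ) : ℝ) : ℂ) * Complex.I ^ k := by
      push_cast
      ring
    rw [this, Complex.im_ofReal_mul]
  simp only [hterm] at h2
  have h3 : Complex.sin (((2 * (n : ℝ) + 1) * x : ℝ) : ℂ) = ((Real.sin ((2 * (n : ℝ) + 1) * x) : ℝ) : ℂ) := (Complex.ofReal_sin _).symm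
  rw [h3] at h2
  simp only [Complex.add_im, Complex.mul_im, Complex.ofReal_im, Complex.ofReal_re,
    Complex.I_im, Complex.I_re, Complex.cos_ofReal_im] at h2
  -- h2 : 0 + (sin((2n+1)x) * 1 + 0 * 0) = ∑ ...
  have h2' : Real.sin ((2 * (n : ℝ) + 1) * x)
      = ∑ k ∈ Finset.range (2 * n + 1 + 1),
          (Real.sin x ^ k * Real.cos x ^ (2 * n + 1 - k) * ((2 * n + 1).choose k : ℝ))
            * (Complex.I ^ k).im := by
    rw [h2]; ring
  rw [h2']
  -- now reindex: only odd k survive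
  set f : ℕ → ℝ := fun k =>
    (Real.sin x ^ k * Real.cos x ^ (2 * n + 1 - k) * ((2 * n + 1).choose k : ℝ))
      * (Complex.I ^ k).im with hf
  have hsub : ((Finset.range (n + 1)).image (fun r => 2 * r + 1)) ⊆ Finset.range (2 * n + 1 + 1) := by
    intro k hk
    simp only [Finset.mem_image, Finset.mem_range] at hk ⊢
    obtain ⟨r, hr, rfl⟩ := hk
    omega
  have hzero : ∀ k ∈ Finset.range (2 * n + 1 + 1),
      k ∉ (Finset.range (n + 1)).image (fun r => 2 * r + 1) → f k = 0 := by
    intro k hk hk'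
    simp only [Finset.mem_image, Finset.mem_range] at hk hk'
    have hev : Even k := by
      rcases Nat.even_or_odd k with h | h
      · exact h
      · obtain ⟨r, rfl⟩ := h
        exact absurd ⟨r, by omega, rfl⟩ hk'
    obtain ⟨r, rfl⟩ := hev
    have : r + r = 2 * r := by ring
    rw [hf]
    simp only [this, im_I_pow_even, mul_zero]
  rw [← Finset.sum_subset hsub hzero,
    Finset.sum_image (by intro a _ b _ h; omega : ∀ a ∈ Finset.range (n + 1), ∀ b ∈ Finset.range (n + 1), 2 * a + 1 = 2 * b + 1 → a = b)]
  refine Finset.sum_congr rfl fun r hr => ?_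
  rw [Finset.mem_range] at hr
  simp only [hf]
  rw [im_I_pow_odd]
  have hc : 2 * n + 1 - (2 * r + 1) = 2 * (n - r) := by omega
  rw [hc]
  ring

/-- For every natural `n` and every real `x` with `sin x ≠ 0`,
`sin((2n+1)x)/(sin x)^{2n+1} = ∑_{r=0}^n (-1)^r C(2n+1, 2r+1) (cot x)^{2(n-r)}`. -/
theorem sin_odd_multiple_expansion (n : ℕ) (x : ℝ) (hx : Real.sin x ≠ 0) :
    Real.sin ((2 * (n : ℝ) + 1) * x) / Real.sin x ^ (2 * n + 1) =
      ∑ r ∈ Finset.range (n + 1),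
        (-1 : ℝ) ^ r * (Nat.choose (2 * n + 1) (2 * r + 1) : ℝ) *
          (Real.cos x / Real.sin x) ^ (2 * (n - r)) := by
  rw [div_eq_iff (pow_ne_zero _ hx), sin_odd_key, Finset.sum_mul]
  refine Finset.sum_congr rfl fun r hr => ?_
  rw [Finset.mem_range] at hr
  have h : 2 * n + 1 = 2 * (n - r) + (2 * r + 1) := by omega
  rw [h, pow_add, div_pow]
  field_simp
  ring
end

section
/- For every positive integer n, ∑_{k=1}^{n} cot²(kπ/(2n+1)) = n(2n−1)/3, where cot u = cos u / sin u. -/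
open Finset
open Polynomial
open Complex (I)

private lemma sum_range_two_mul' {M : Type*} [AddCommMonoid M] (f : ℕ → M) (n : ℕ) :
    ∑ m ∈ range (2 * n), f m = ∑ j ∈ range n, (f (2 * j) + f (2 * j + 1)) := by
  induction n with
  | zero => simp
  | succ n ih =>
    rw [Finset.sum_range_succ, ← ih, show 2 * (n + 1) = 2 * n + 1 + 1 by ring,
      Finset.sum_range_succ, Finset.sum_range_succ, add_assoc]

private lemma sin_odd_expand (n : ℕ) (x : ℝ) :
    Real.sin ((2 * n + 1) * x) =
      ∑ j ∈ range (n + 1),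
        (-1 : ℝ) ^ j * ((2 * n + 1).choose (2 * j + 1)) *
          Real.cos x ^ (2 * (n - j)) * Real.sin x ^ (2 * j + 1) := by
  have h := Complex.cos_add_sin_mul_I_pow (2 * n + 1) (x : ℂ)
  rw [add_comm, add_pow] at h
  have him := congrArg Complex.im h
  rw [show ((2 * (n:ℕ) + 1 : ℕ) : ℂ) * (x : ℂ) = (((2 * n + 1 : ℝ) * x : ℝ) : ℂ) by
    push_cast; ring] at him
  rw [Complex.add_im, Complex.mul_im, Complex.cos_ofReal_im, Complex.sin_ofReal_re,
    Complex.sin_ofReal_im, Complex.I_re, Complex.I_im] at him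
  have hterm : ∀ m, ((Complex.sin x * I) ^ m * Complex.cos x ^ (2 * n + 1 - m) *
        ((2 * n + 1).choose m : ℂ)).im
      = Real.sin x ^ m * Real.cos x ^ (2 * n + 1 - m) * ((2 * n + 1).choose m) * (I ^ m).im := by
    intro m
    rw [show (Complex.sin x * I) ^ m * Complex.cos x ^ (2 * n + 1 - m) *
          ((2 * n + 1).choose m : ℂ)
        = ((Real.sin x ^ m * Real.cos x ^ (2 * n + 1 - m) * ((2 * n + 1).choose m) : ℝ) : ℂ)
          * I ^ m by
      rw [← Complex.ofReal_sin, ← Complex.ofReal_cos]; push_cast; ring]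
    rw [Complex.im_ofReal_mul]
  rw [Complex.im_sum] at him
  simp only [hterm] at him
  rw [show 2 * n + 1 + 1 = 2 * (n + 1) by ring, sum_range_two_mul'] at him
  have heven : ∀ j, (I ^ (2 * j)).im = 0 := by
    intro j
    rw [pow_mul, Complex.I_sq]
    rw [show ((-1 : ℂ)) = ((-1 : ℝ) : ℂ) by norm_num, ← Complex.ofReal_pow, Complex.ofReal_im]
  have hodd : ∀ j, (I ^ (2 * j + 1)).im = (-1 : ℝ) ^ j := by
    intro j
    rw [pow_succ, pow_mul, Complex.I_sq,
      show ((-1 : ℂ)) = ((-1 : ℝ) : ℂ) by norm_num, ← Complex.ofReal_pow,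
      Complex.im_ofReal_mul, Complex.I_im, mul_one]
  simp only [heven, hodd, mul_zero, zero_add] at him
  simp only [mul_one, add_zero, zero_add] at him
  rw [← him]
  apply Finset.sum_congr rfl
  intro j hj
  have hj' : j ≤ n := by simpa using Nat.lt_succ_iff.mp (Finset.mem_range.mp hj)
  rw [show 2 * n + 1 - (2 * j + 1) = 2 * (n - j) by omega]
  ring

private lemma cot_sum_zero (n : ℕ) (x : ℝ) (hs : Real.sin x ≠ 0)
    (hz : Real.sin ((2 * n + 1) * x) = 0) :
    ∑ i ∈ range (n + 1),
      (-1 : ℝ) ^ (n - i) * ((2 * n + 1).choose (2 * (n - i) + 1)) *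
        ((Real.cos x / Real.sin x) ^ 2) ^ i = 0 := by
  have hpow : Real.sin x ^ (2 * n + 1) ≠ 0 := pow_ne_zero _ hs
  have key : (∑ i ∈ range (n + 1),
      (-1 : ℝ) ^ (n - i) * ((2 * n + 1).choose (2 * (n - i) + 1)) *
        ((Real.cos x / Real.sin x) ^ 2) ^ i) * Real.sin x ^ (2 * n + 1) = 0 := by
    rw [Finset.sum_mul]
    have hterm : ∀ i ∈ range (n + 1),
        (-1 : ℝ) ^ (n - i) * ((2 * n + 1).choose (2 * (n - i) + 1)) *
          ((Real.cos x / Real.sin x) ^ 2) ^ i * Real.sin x ^ (2 * n + 1)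
        = (-1 : ℝ) ^ (n - i) * ((2 * n + 1).choose (2 * (n - i) + 1)) *
          Real.cos x ^ (2 * (n - (n - i))) * Real.sin x ^ (2 * (n - i) + 1) := by
      intro i hi
      have hi' : i ≤ n := Nat.lt_succ_iff.mp (Finset.mem_range.mp hi)
      rw [show n - (n - i) = i by omega, ← pow_mul, div_pow,
        show (2 : ℕ) * n + 1 = 2 * i + (2 * (n - i) + 1) by omega, pow_add]
      have h2i : Real.sin x ^ (2 * i) ≠ 0 := pow_ne_zero _ hs
      field_simp
    rw [Finset.sum_congr rfl hterm]
    have hrefl := Finset.sum_range_reflect (fun j =>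
      (-1 : ℝ) ^ j * ((2 * n + 1).choose (2 * j + 1)) *
        Real.cos x ^ (2 * (n - j)) * Real.sin x ^ (2 * j + 1)) (n + 1)
    simp only [Nat.add_sub_cancel] at hrefl
    calc ∑ i ∈ range (n + 1), (-1 : ℝ) ^ (n - i) * ((2 * n + 1).choose (2 * (n - i) + 1)) *
          Real.cos x ^ (2 * (n - (n - i))) * Real.sin x ^ (2 * (n - i) + 1)
        = ∑ j ∈ range (n + 1), (-1 : ℝ) ^ j * ((2 * n + 1).choose (2 * j + 1)) *
          Real.cos x ^ (2 * (n - j)) * Real.sin x ^ (2 * j + 1) := hrefl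
      _ = Real.sin ((2 * n + 1) * x) := (sin_odd_expand n x).symm
      _ = 0 := hz
  rcases mul_eq_zero.mp key with h | h
  · exact h
  · exact absurd h hpow

private lemma choose_arith (n : ℕ) (hn : 0 < n) :
    (2 * n + 1).choose 3 * 6 = (2 * n + 1) * (2 * n) * (2 * n - 1) := by
  obtain ⟨m, rfl⟩ : ∃ m, n = m + 1 := ⟨n - 1, by omega⟩
  have h3 : 3 ≤ 2 * (m + 1) + 1 := by omega
  have h := Nat.choose_mul_factorial_mul_factorial h3
  rw [show 2 * (m + 1) + 1 - 3 = 2 * m by omega] at h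
  have hfac : (2 * (m + 1) + 1).factorial
      = (2 * (m + 1) + 1) * (2 * (m + 1)) * (2 * (m + 1) - 1) * (2 * m).factorial := by
    rw [show 2 * (m + 1) - 1 = 2 * m + 1 by omega, show 2 * (m + 1) + 1 = 2 * m + 1 + 1 + 1
      by omega]
    simp only [Nat.factorial_succ]
    ring
  have h6 : (3 : ℕ).factorial = 6 := by decide
  rw [h6, hfac] at h
  exact Nat.eq_of_mul_eq_mul_right (Nat.factorial_pos (2 * m)) h

/-- For every positive integer `n`,
`∑_{k=1}^n cot²(kπ/(2n+1)) = n(2n-1)/3`, where `cot u = cos u / sin u`. -/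
theorem sum_cot_sq (n : ℕ) (hn : 0 < n) :
    ∑ k ∈ Finset.Icc 1 n,
        (Real.cos ((k : ℝ) * Real.pi / (2 * (n : ℝ) + 1)) /
          Real.sin ((k : ℝ) * Real.pi / (2 * (n : ℝ) + 1))) ^ 2 =
      (n : ℝ) * (2 * (n : ℝ) - 1) / 3 := by
  classical
  set θ : ℕ → ℝ := fun k => (k : ℝ) * Real.pi / (2 * (n : ℝ) + 1) with hθ
  set r : ℕ → ℝ := fun k => (Real.cos (θ k) / Real.sin (θ k)) ^ 2 with hr
  set a : ℕ → ℝ := fun i => (-1 : ℝ) ^ (n - i) * ((2 * n + 1).choose (2 * (n - i) + 1)) with ha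
  set p : Polynomial ℝ := ∑ i ∈ range (n + 1), Polynomial.monomial i (a i) with hp
  have hden : (0 : ℝ) < 2 * (n : ℝ) + 1 := by positivity
  have hθmem : ∀ k ∈ Finset.Icc 1 n, 0 < θ k ∧ θ k < Real.pi / 2 := by
    intro k hk
    rw [Finset.mem_Icc] at hk
    constructor
    · apply div_pos (mul_pos _ Real.pi_pos) hden
      exact_mod_cast Nat.lt_of_lt_of_le Nat.zero_lt_one hk.1
    · rw [div_lt_iff₀ hden]
      have hk2 : (k : ℝ) ≤ n := by exact_mod_cast hk.2
      nlinarith [Real.pi_pos]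
  have hsin : ∀ k ∈ Finset.Icc 1 n, 0 < Real.sin (θ k) := by
    intro k hk
    obtain ⟨h1, h2⟩ := hθmem k hk
    exact Real.sin_pos_of_pos_of_lt_pi h1 (h2.trans (by linarith [Real.pi_pos]))
  have hcos : ∀ k ∈ Finset.Icc 1 n, 0 < Real.cos (θ k) := by
    intro k hk
    obtain ⟨h1, h2⟩ := hθmem k hk
    exact Real.cos_pos_of_mem_Ioo ⟨by linarith [Real.pi_pos], h2⟩
  have hcoeff : ∀ j ≤ n, p.coeff j = a j := by
    intro j hj
    rw [hp, Polynomial.finset_sum_coeff]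
    simp only [Polynomial.coeff_monomial]
    rw [Finset.sum_ite_eq' (range (n + 1)) j a, if_pos (Finset.mem_range.mpr (by omega))]
  have hcoeff' : ∀ j, n < j → p.coeff j = 0 := by
    intro j hj
    rw [hp, Polynomial.finset_sum_coeff]
    simp only [Polynomial.coeff_monomial]
    rw [Finset.sum_ite_eq' (range (n + 1)) j a, if_neg (by simp; omega)]
  have han : a n = 2 * (n : ℝ) + 1 := by
    simp only [ha, Nat.sub_self, pow_zero, one_mul, mul_zero, zero_add, Nat.choose_one_right]
    push_cast; ring
  have hpcn : p.coeff n ≠ 0 := by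
    rw [hcoeff n le_rfl, han]; positivity
  have hpne : p ≠ 0 := fun h => hpcn (by rw [h]; simp)
  have hdeg : p.natDegree = n :=
    le_antisymm (Polynomial.natDegree_le_iff_coeff_eq_zero.mpr hcoeff')
      (Polynomial.le_natDegree_of_ne_zero hpcn)
  have hroot : ∀ k ∈ Finset.Icc 1 n, p.IsRoot (r k) := by
    intro k hk
    have hsk : Real.sin (θ k) ≠ 0 := ne_of_gt (hsin k hk)
    have hz : Real.sin ((2 * (n : ℝ) + 1) * θ k) = 0 := by
      rw [show (2 * (n : ℝ) + 1) * θ k = (k : ℝ) * Real.pi by rw [hθ]; field_simp]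
      exact_mod_cast Real.sin_nat_mul_pi k
    have h0 := cot_sum_zero n (θ k) hsk (by push_cast; exact_mod_cast hz)
    rw [Polynomial.IsRoot, hp, Polynomial.eval_finset_sum]
    simpa [Polynomial.eval_monomial, ha, hr] using h0
  have hanti : ∀ k ∈ Finset.Icc 1 n, ∀ l ∈ Finset.Icc 1 n, k < l → r l < r k := by
    intro k hk l hl hkl
    obtain ⟨hk1, hk2⟩ := hθmem k hk
    obtain ⟨hl1, hl2⟩ := hθmem l hl
    have hθlt : θ k < θ l := by
      have hkl' : (k : ℝ) < l := by exact_mod_cast hkl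
      simp only [hθ]
      apply div_lt_div_of_pos_right ?_ hden
      exact mul_lt_mul_of_pos_right hkl' Real.pi_pos
    have hsub : 0 < Real.sin (θ l) * Real.cos (θ k) - Real.cos (θ l) * Real.sin (θ k) := by
      have h1 : 0 < Real.sin (θ l - θ k) :=
        Real.sin_pos_of_pos_of_lt_pi (by linarith)
          (by linarith [Real.pi_pos])
      rwa [Real.sin_sub] at h1
    have hc : Real.cos (θ l) / Real.sin (θ l) < Real.cos (θ k) / Real.sin (θ k) := by
      rw [div_lt_div_iff₀ (hsin l hl) (hsin k hk)]
      nlinarith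
    have hcl : 0 < Real.cos (θ l) / Real.sin (θ l) := div_pos (hcos l hl) (hsin l hl)
    rw [hr]
    exact pow_lt_pow_left₀ hc (le_of_lt hcl) (by norm_num)
  set M : Multiset ℝ := (Finset.Icc 1 n).val.map r with hM
  have hMcard : Multiset.card M = n := by
    rw [hM, Multiset.card_map, Finset.card_val, Nat.card_Icc]; omega
  have hMnodup : M.Nodup := by
    rw [hM]
    refine Multiset.Nodup.map_on ?_ (Finset.Icc 1 n).nodup
    intro k hk l hl hkl
    rw [Finset.mem_val] at hk hl
    by_contra hne
    rcases Nat.lt_or_ge k l with h | h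
    · exact (hanti k hk l hl h).ne' hkl
    · exact (hanti l hl k hk (by omega)).ne' hkl.symm
  have hle : M ≤ p.roots := by
    rw [Multiset.le_iff_count]
    intro b
    by_cases hb : b ∈ M
    · rw [Multiset.count_eq_one_of_mem hMnodup hb]
      have hbr : b ∈ p.roots := by
        obtain ⟨k, hk, rfl⟩ := Multiset.mem_map.mp hb
        rw [Finset.mem_val] at hk
        exact (Polynomial.mem_roots hpne).mpr (hroot k hk)
      exact Multiset.one_le_count_iff_mem.mpr hbr
    · simp [Multiset.count_eq_zero_of_notMem hb]
  have hcard : Multiset.card p.roots = n :=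
    le_antisymm (hdeg ▸ p.card_roots') (hMcard ▸ Multiset.card_le_card hle)
  have hMeq : M = p.roots := Multiset.eq_of_le_of_card_le hle (by rw [hcard, hMcard])
  have hsplits : p.Splits :=
    (Polynomial.splits_iff_card_roots).mpr (by rw [hcard, hdeg])
  have hfact := Polynomial.Splits.eq_prod_roots hsplits
  have hlead : p.leadingCoeff = 2 * (n : ℝ) + 1 := by
    rw [Polynomial.leadingCoeff, hdeg, hcoeff n le_rfl, han]
  have hq := Polynomial.multiset_prod_X_sub_C_coeff_card_pred p.roots (by rw [hcard]; omega)
  rw [hcard] at hq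
  have hcoeff1 := congrArg (fun q => Polynomial.coeff q (n - 1)) hfact
  simp only [Polynomial.coeff_C_mul] at hcoeff1
  have hanm : a (n - 1) = -(((2 * n + 1).choose 3 : ℕ) : ℝ) := by
    rw [ha]
    simp only [show n - (n - 1) = 1 by omega]
    norm_num
  rw [hcoeff (n - 1) (by omega), hanm, hlead, hq] at hcoeff1
  have hsum : p.roots.sum = (((2 * n + 1).choose 3 : ℕ) : ℝ) / (2 * (n : ℝ) + 1) := by
    rw [eq_div_iff (ne_of_gt hden)]
    nlinarith [hcoeff1]
  have hMsum : ∑ k ∈ Finset.Icc 1 n, r k = M.sum := rfl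
  have hgoal : ∑ k ∈ Finset.Icc 1 n, r k = (((2 * n + 1).choose 3 : ℕ) : ℝ) / (2 * (n : ℝ) + 1) := by
    rw [hMsum, hMeq, hsum]
  have hch : (((2 * n + 1).choose 3 : ℕ) : ℝ) * 6 = (2 * (n : ℝ) + 1) * (2 * n) * (2 * n - 1) := by
    have h0 := choose_arith n hn
    have h1 : (1 : ℕ) ≤ 2 * n := by omega
    have h2 : (((2 * n + 1).choose 3 : ℕ) : ℝ) * 6
        = ((2 * n + 1 : ℕ) : ℝ) * ((2 * n : ℕ) : ℝ) * (((2 * n - 1 : ℕ) : ℕ) : ℝ) := by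
      exact_mod_cast h0
    rw [Nat.cast_sub h1] at h2
    push_cast at h2 ⊢
    linarith
  rw [hgoal]
  rw [div_eq_div_iff (ne_of_gt hden) (by norm_num : (3:ℝ) ≠ 0)]
  nlinarith [hch]
end

section
/- Let (A_t) and (B_t) be sequences of N_t×N_t positive semidefinite Hermitian complex matrices with N_t → ∞. Suppose there is a constant C such that the operator norms satisfy ‖A_t‖ ≤ C and ‖B_t‖ ≤ C for all t, and that the normalized Frobenius norm ‖A_t − B_t‖_F = √(Tr((A_t−B_t)(A_t−B_t)^H)/N_t) tends to zero as t → ∞. Then for every continuous function ψ : ℝ → ℝ, (1/N_t) · ( ∑_{n=0}^{N_t−1} ψ(λ_n(A_t)) − ∑_{n=0}^{N_t−1} ψ(λ_n(B_t)) ) → 0 as t → ∞, where λ_0(·), …, λ_{N_t−1}(·) denote the (real, nonnegative) eigenvalues counted with multiplicity. -/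
open Matrix Filter
open scoped ComplexOrder

/-- The Euclidean norm of a complex vector. -/
noncomputable def eNorm {n : ℕ} (v : Fin n → ℂ) : ℝ :=
  Real.sqrt (∑ i, ‖v i‖ ^ 2)

/-- The operator (spectral) norm of a complex matrix: the supremum of
`‖A v‖ / ‖v‖` over nonzero vectors `v`, with Euclidean norms. -/
noncomputable def opNorm {m n : ℕ} (A : Matrix (Fin m) (Fin n) ℂ) : ℝ :=
  sSup {c : ℝ | ∃ v : Fin n → ℂ, v ≠ 0 ∧ c = eNorm (A.mulVec v) / eNorm v}

/-- The Frobenius norm normalized by the number of rows: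
`‖A‖_F = √(Tr(A Aᴴ)/m) = √((∑_{i,j} |a_{ij}|²)/m)`. -/
noncomputable def frobNorm {m n : ℕ} (A : Matrix (Fin m) (Fin n) ℂ) : ℝ :=
  Real.sqrt ((∑ i, ∑ j, ‖A i j‖ ^ 2) / m)

open scoped Matrix.Norms.L2Operator

namespace SzegoAux

/-- Unnormalized squared Frobenius norm. -/
noncomputable def frob2 {m n : ℕ} (A : Matrix (Fin m) (Fin n) ℂ) : ℝ :=
  ∑ i, ∑ j, ‖A i j‖ ^ 2

lemma frob2_nonneg {m n : ℕ} (A : Matrix (Fin m) (Fin n) ℂ) : 0 ≤ frob2 A := by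
  unfold frob2; positivity

lemma eNorm_eq {n : ℕ} (v : Fin n → ℂ) :
    eNorm v = ‖(WithLp.equiv 2 (Fin n → ℂ)).symm v‖ := by
  rw [EuclideanSpace.norm_eq]; rfl

lemma eNorm_nonneg {n : ℕ} (v : Fin n → ℂ) : 0 ≤ eNorm v := Real.sqrt_nonneg _

lemma eNorm_pos {n : ℕ} {v : Fin n → ℂ} (hv : v ≠ 0) : 0 < eNorm v := by
  rw [eNorm_eq, norm_pos_iff]
  exact fun h => hv (by simpa using h)

lemma eNorm_mulVec_le {m n : ℕ} (A : Matrix (Fin m) (Fin n) ℂ) (v : Fin n → ℂ) :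
    eNorm (A.mulVec v) ≤ ‖A‖ * eNorm v := by
  rw [eNorm_eq, eNorm_eq]
  exact A.l2_opNorm_mulVec ((WithLp.equiv 2 (Fin n → ℂ)).symm v)

lemma opNorm_nonneg' {m n : ℕ} (A : Matrix (Fin m) (Fin n) ℂ) : 0 ≤ opNorm A := by
  apply Real.sSup_nonneg
  rintro c ⟨v, hv, rfl⟩
  exact div_nonneg (eNorm_nonneg _) (eNorm_nonneg _)

lemma opNorm_bddAbove {m n : ℕ} (A : Matrix (Fin m) (Fin n) ℂ) :
    BddAbove {c : ℝ | ∃ v : Fin n → ℂ, v ≠ 0 ∧ c = eNorm (A.mulVec v) / eNorm v} := by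
  refine ⟨‖A‖, ?_⟩
  rintro c ⟨v, hv, rfl⟩
  rw [div_le_iff₀ (eNorm_pos hv)]
  exact eNorm_mulVec_le A v

lemma norm_le_opNorm {m n : ℕ} (A : Matrix (Fin m) (Fin n) ℂ) : ‖A‖ ≤ opNorm A := by
  rw [Matrix.l2_opNorm_def]
  refine ContinuousLinearMap.opNorm_le_bound _ (opNorm_nonneg' A) fun x => ?_
  have h1 : ‖((Matrix.toEuclideanLin.trans LinearMap.toContinuousLinearMap) A) x‖
      = eNorm (A.mulVec (WithLp.equiv 2 (Fin n → ℂ) x)) := by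
    rw [eNorm_eq]; rfl
  have h2 : ‖x‖ = eNorm (WithLp.equiv 2 (Fin n → ℂ) x) := by
    rw [eNorm_eq]; rfl
  set v : Fin n → ℂ := WithLp.equiv 2 (Fin n → ℂ) x with hv
  by_cases h : v = 0
  · have hx : x = 0 := by rw [hv] at h; simpa using h
    simp [hx]
  · rw [h1, h2, ← div_mul_cancel₀ (eNorm (A.mulVec v)) (ne_of_gt (eNorm_pos h))]
    exact mul_le_mul_of_nonneg_right (le_csSup (opNorm_bddAbove A) ⟨v, h, rfl⟩)
      (eNorm_nonneg v)

lemma eigenvalues_le_opNorm {n : ℕ} {A : Matrix (Fin n) (Fin n) ℂ}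
    (hA : A.IsHermitian) (i : Fin n) : hA.eigenvalues i ≤ opNorm A := by
  set v : Fin n → ℂ := ⇑(hA.eigenvectorBasis i) with hvdef
  have hv0 : v ≠ 0 := by
    intro h
    exact hA.eigenvectorBasis.orthonormal.ne_zero i (by ext j; exact congrFun h j)
  have hnv : eNorm v = 1 := by
    rw [eNorm_eq]
    have := hA.eigenvectorBasis.orthonormal.1 i
    exact this
  have hAv : eNorm (A.mulVec v) = |hA.eigenvalues i| := by
    rw [hA.mulVec_eigenvectorBasis i, eNorm_eq]
    have : (WithLp.equiv 2 (Fin n → ℂ)).symm (hA.eigenvalues i • v)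
        = hA.eigenvalues i • (WithLp.equiv 2 (Fin n → ℂ)).symm v := rfl
    rw [this, norm_smul, ← eNorm_eq, hnv]
    simp [Real.norm_eq_abs]
  have hmem : |hA.eigenvalues i| ∈
      {c : ℝ | ∃ w : Fin n → ℂ, w ≠ 0 ∧ c = eNorm (A.mulVec w) / eNorm w} :=
    ⟨v, hv0, by rw [hAv, hnv, div_one]⟩
  exact (le_abs_self _).trans (le_csSup (opNorm_bddAbove A) hmem)

lemma pow_conj_aux {n : ℕ} (U D X : Matrix (Fin n) (Fin n) ℂ)
    (h1 : star U * U = 1) (h2 : U * star U = 1)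
    (hX : X = U * D * star U) (k : ℕ) : X ^ k = U * D ^ k * star U := by
  induction k with
  | zero => simpa using h2.symm
  | succ k ih =>
    rw [pow_succ, ih, hX, pow_succ]
    have : U * D ^ k * star U * (U * D * star U)
        = U * D ^ k * (star U * U) * D * star U := by
      simp only [Matrix.mul_assoc]
    rw [this, h1, Matrix.mul_one]
    simp only [Matrix.mul_assoc]

lemma pow_spectral {n : ℕ} {A : Matrix (Fin n) (Fin n) ℂ} (hA : A.IsHermitian) (k : ℕ) :
    A ^ k = (hA.eigenvectorUnitary : Matrix (Fin n) (Fin n) ℂ)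
      * (Matrix.diagonal (RCLike.ofReal ∘ hA.eigenvalues)) ^ k
      * (star (hA.eigenvectorUnitary : Matrix (Fin n) (Fin n) ℂ)) :=
  pow_conj_aux _ _ _ (Unitary.coe_star_mul_self hA.eigenvectorUnitary)
    (Unitary.coe_mul_star_self hA.eigenvectorUnitary) hA.spectral_theorem k

lemma trace_pow_eq {n : ℕ} {A : Matrix (Fin n) (Fin n) ℂ} (hA : A.IsHermitian) (k : ℕ) :
    (A ^ k).trace = ∑ i, (hA.eigenvalues i : ℂ) ^ k := by
  rw [pow_spectral hA k, Matrix.trace_mul_cycle,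
    Unitary.coe_star_mul_self hA.eigenvectorUnitary, Matrix.one_mul,
    Matrix.diagonal_pow, Matrix.trace_diagonal]
  simp

lemma sum_eig_pow {n : ℕ} {A : Matrix (Fin n) (Fin n) ℂ} (hA : A.IsHermitian) (k : ℕ) :
    ∑ i, hA.eigenvalues i ^ k = ((A ^ k).trace).re := by
  rw [trace_pow_eq hA k]
  have : (∑ i, (hA.eigenvalues i : ℂ) ^ k) = ((∑ i, hA.eigenvalues i ^ k : ℝ) : ℂ) := by
    push_cast; ring
  rw [this, Complex.ofReal_re]

/-- Cauchy–Schwarz for the trace. -/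
lemma norm_trace_mul_le {n : ℕ} (X Y : Matrix (Fin n) (Fin n) ℂ) :
    ‖(X * Y).trace‖ ≤ Real.sqrt (frob2 X) * Real.sqrt (frob2 Y) := by
  have h1 : (X * Y).trace = ∑ p : Fin n × Fin n, X p.1 p.2 * Y p.2 p.1 := by
    rw [Matrix.trace]
    simp only [Matrix.diag, Matrix.mul_apply]
    exact (Fintype.sum_prod_type' (fun i j => X i j * Y j i)).symm
  rw [h1]
  calc ‖∑ p : Fin n × Fin n, X p.1 p.2 * Y p.2 p.1‖
      ≤ ∑ p : Fin n × Fin n, ‖X p.1 p.2‖ * ‖Y p.2 p.1‖ := by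
        refine (norm_sum_le _ _).trans (Finset.sum_le_sum fun p _ => le_of_eq (norm_mul _ _))
    _ ≤ Real.sqrt (∑ p : Fin n × Fin n, ‖X p.1 p.2‖ ^ 2)
        * Real.sqrt (∑ p : Fin n × Fin n, ‖Y p.2 p.1‖ ^ 2) := by
        have hcs := Finset.sum_mul_sq_le_sq_mul_sq Finset.univ
          (fun p : Fin n × Fin n => ‖X p.1 p.2‖) (fun p => ‖Y p.2 p.1‖)
        have h0 : (0:ℝ) ≤ ∑ p : Fin n × Fin n, ‖X p.1 p.2‖ * ‖Y p.2 p.1‖ := by positivity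
        have := Real.sqrt_le_sqrt hcs
        rwa [Real.sqrt_sq h0, Real.sqrt_mul (by positivity)] at this
    _ = Real.sqrt (frob2 X) * Real.sqrt (frob2 Y) := by
        rw [frob2, frob2]
        congr 1
        · exact congrArg Real.sqrt (Fintype.sum_prod_type' (fun i j => ‖X i j‖ ^ 2))
        · refine congrArg Real.sqrt ?_
          rw [← Fintype.sum_prod_type' (fun i j => ‖Y i j‖ ^ 2)]
          exact Fintype.sum_equiv (Equiv.prodComm _ _) _ _ (fun p => rfl)

lemma frob2_eq_sum_cols {m n : ℕ} (A : Matrix (Fin m) (Fin n) ℂ) :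
    frob2 A = ∑ j, eNorm (fun i => A i j) ^ 2 := by
  rw [frob2, Finset.sum_comm]
  refine Finset.sum_congr rfl fun j _ => ?_
  rw [eNorm, Real.sq_sqrt (by positivity)]

lemma frob2_mul_le_left {m n p : ℕ} (X : Matrix (Fin m) (Fin n) ℂ)
    (Y : Matrix (Fin n) (Fin p) ℂ) : frob2 (X * Y) ≤ ‖X‖ ^ 2 * frob2 Y := by
  rw [frob2_eq_sum_cols, frob2_eq_sum_cols, Finset.mul_sum]
  refine Finset.sum_le_sum fun j _ => ?_
  have h1 : (fun i => (X * Y) i j) = X.mulVec (fun l => Y l j) := by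
    funext i; simp [Matrix.mul_apply, Matrix.mulVec, dotProduct]
  rw [h1, ← mul_pow]
  exact pow_le_pow_left₀ (by exact Real.sqrt_nonneg _) (eNorm_mulVec_le X _) 2

lemma frob2_conjTranspose {m n : ℕ} (A : Matrix (Fin m) (Fin n) ℂ) :
    frob2 Aᴴ = frob2 A := by
  rw [frob2, frob2, Finset.sum_comm]
  exact Finset.sum_congr rfl fun i _ => Finset.sum_congr rfl fun j _ => by
    simp [Matrix.conjTranspose_apply]

lemma frob2_mul_le_right {m n p : ℕ} (X : Matrix (Fin m) (Fin n) ℂ)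
    (Y : Matrix (Fin n) (Fin p) ℂ) : frob2 (X * Y) ≤ frob2 X * ‖Y‖ ^ 2 := by
  rw [← frob2_conjTranspose (X * Y), Matrix.conjTranspose_mul]
  calc frob2 (Yᴴ * Xᴴ) ≤ ‖Yᴴ‖ ^ 2 * frob2 Xᴴ := frob2_mul_le_left _ _
    _ = frob2 X * ‖Y‖ ^ 2 := by
        rw [Matrix.l2_opNorm_conjTranspose, frob2_conjTranspose]; ring

lemma frob2_one {n : ℕ} : frob2 (1 : Matrix (Fin n) (Fin n) ℂ) = n := by
  rw [frob2]
  have : ∀ i : Fin n, ∑ j, ‖(1 : Matrix (Fin n) (Fin n) ℂ) i j‖ ^ 2 = 1 := by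
    intro i
    rw [Finset.sum_eq_single i]
    · simp
    · intro b _ hb; simp [Matrix.one_apply, (Ne.symm hb)]
    · simp
  rw [Finset.sum_congr rfl (fun i _ => this i)]
  simp

lemma frob2_le_card {n : ℕ} (A : Matrix (Fin n) (Fin n) ℂ) :
    frob2 A ≤ n * ‖A‖ ^ 2 := by
  have := frob2_mul_le_left A (1 : Matrix (Fin n) (Fin n) ℂ)
  rw [Matrix.mul_one, frob2_one] at this
  linarith [this]

lemma norm_one_le {n : ℕ} : ‖(1 : Matrix (Fin n) (Fin n) ℂ)‖ ≤ 1 := by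
  have h : (toEuclideanCLM (n := Fin n) (𝕜 := ℂ)) 1 = 1 := _root_.map_one _
  rw [Matrix.cstar_norm_def, h, ContinuousLinearMap.one_def]
  exact ContinuousLinearMap.norm_id_le

lemma norm_pow_le'' {n : ℕ} (A : Matrix (Fin n) (Fin n) ℂ) (k : ℕ) :
    ‖A ^ k‖ ≤ ‖A‖ ^ k := by
  induction k with
  | zero => simpa using norm_one_le
  | succ k ih =>
    rw [pow_succ, pow_succ]
    exact (Matrix.l2_opNorm_mul _ _).trans
      (mul_le_mul_of_nonneg_right ih (norm_nonneg _))

lemma telescope {R : Type*} [Ring R] (a b : R) (k : ℕ) :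
    a ^ k - b ^ k = ∑ j ∈ Finset.range k, a ^ j * (a - b) * b ^ (k - 1 - j) := by
  induction k with
  | zero => simp
  | succ k ih =>
    rw [Finset.sum_range_succ]
    have h1 : ∀ j ∈ Finset.range k,
        a ^ j * (a - b) * b ^ (k + 1 - 1 - j) = (a ^ j * (a - b) * b ^ (k - 1 - j)) * b := by
      intro j hj
      have hjk := Finset.mem_range.mp hj
      have he : k + 1 - 1 - j = (k - 1 - j) + 1 := by omega
      rw [he, pow_succ, ← mul_assoc]
    rw [Finset.sum_congr rfl h1, ← Finset.sum_mul, ← ih]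
    simp only [Nat.add_sub_cancel, Nat.sub_self, pow_zero, mul_one]
    rw [pow_succ, pow_succ]
    noncomm_ring

/-- Key estimate. -/
lemma key {n : ℕ} {A B : Matrix (Fin n) (Fin n) ℂ} {C : ℝ}
    (hA : ‖A‖ ≤ C) (hB : ‖B‖ ≤ C) (hC : 0 ≤ C) (k : ℕ) :
    ‖(A ^ k).trace - (B ^ k).trace‖
      ≤ k * C ^ (k - 1) * (Real.sqrt n * Real.sqrt (frob2 (A - B))) := by
  have hAj : ∀ j, ‖A ^ j‖ ≤ C ^ j :=
    fun j => (norm_pow_le'' A j).trans (pow_le_pow_left₀ (norm_nonneg _) hA j)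
  have hBj : ∀ j, ‖B ^ j‖ ≤ C ^ j :=
    fun j => (norm_pow_le'' B j).trans (pow_le_pow_left₀ (norm_nonneg _) hB j)
  have htr : (A ^ k).trace - (B ^ k).trace
      = ∑ j ∈ Finset.range k, ((B ^ (k - 1 - j) * A ^ j) * (A - B)).trace := by
    rw [← Matrix.trace_sub, telescope A B k, Matrix.trace_sum]
    exact Finset.sum_congr rfl fun j _ => Matrix.trace_mul_cycle _ _ _
  rw [htr]
  calc ‖∑ j ∈ Finset.range k, ((B ^ (k - 1 - j) * A ^ j) * (A - B)).trace‖
      ≤ ∑ j ∈ Finset.range k, ‖((B ^ (k - 1 - j) * A ^ j) * (A - B)).trace‖ :=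
        norm_sum_le _ _
    _ ≤ ∑ j ∈ Finset.range k,
        Real.sqrt (frob2 (B ^ (k - 1 - j) * A ^ j)) * Real.sqrt (frob2 (A - B)) :=
        Finset.sum_le_sum fun j _ => norm_trace_mul_le _ _
    _ ≤ ∑ j ∈ Finset.range k,
        (Real.sqrt n * C ^ (k - 1)) * Real.sqrt (frob2 (A - B)) := by
        refine Finset.sum_le_sum fun j hj => ?_
        refine mul_le_mul_of_nonneg_right ?_ (Real.sqrt_nonneg _)
        have h2 : frob2 (B ^ (k - 1 - j) * A ^ j) ≤ n * (C ^ (k - 1)) ^ 2 := by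
          calc frob2 (B ^ (k - 1 - j) * A ^ j)
              ≤ ‖B ^ (k - 1 - j)‖ ^ 2 * frob2 (A ^ j) := frob2_mul_le_left _ _
            _ ≤ (C ^ (k - 1 - j)) ^ 2 * (n * (C ^ j) ^ 2) := by
                refine mul_le_mul ?_ ?_ (frob2_nonneg _) (by positivity)
                · exact pow_le_pow_left₀ (norm_nonneg _) (hBj _) 2
                · exact (frob2_le_card _).trans
                    (mul_le_mul_of_nonneg_left
                      (pow_le_pow_left₀ (norm_nonneg _) (hAj j) 2) (Nat.cast_nonneg n))
            _ = n * (C ^ (k - 1 - j) * C ^ j) ^ 2 := by ring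
            _ = n * (C ^ (k - 1)) ^ 2 := by
                have hjk := Finset.mem_range.mp hj
                have he : k - 1 - j + j = k - 1 := by omega
                rw [← pow_add, he]
        calc Real.sqrt (frob2 (B ^ (k - 1 - j) * A ^ j))
            ≤ Real.sqrt (n * (C ^ (k - 1)) ^ 2) := Real.sqrt_le_sqrt h2
          _ = Real.sqrt n * C ^ (k - 1) := by
              rw [Real.sqrt_mul (by positivity), Real.sqrt_sq (by positivity)]
    _ = k * C ^ (k - 1) * (Real.sqrt n * Real.sqrt (frob2 (A - B))) := by
        rw [Finset.sum_const, Finset.card_range]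
        simp only [nsmul_eq_mul]
        ring

end SzegoAux

open SzegoAux in
/-- Szegő-type theorem for asymptotically equivalent
matrices. -/
theorem szego_asymptotically_equivalent
    (N : ℕ → ℕ) (hN : Tendsto (fun t => N t) atTop atTop)
    (A B : ∀ t, Matrix (Fin (N t)) (Fin (N t)) ℂ)
    (hA : ∀ t, (A t).PosSemidef) (hB : ∀ t, (B t).PosSemidef)
    (hbdd : ∃ C : ℝ, ∀ t, opNorm (A t) ≤ C ∧ opNorm (B t) ≤ C)
    (hAB : Tendsto (fun t => frobNorm (A t - B t)) atTop (nhds 0))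
    (ψ : ℝ → ℝ) (hψ : Continuous ψ) :
    Tendsto (fun t => (1 / (N t : ℝ)) *
        ((∑ n, ψ ((hA t).isHermitian.eigenvalues n)) -
          ∑ n, ψ ((hB t).isHermitian.eigenvalues n)))
      atTop (nhds 0) := by
  obtain ⟨C, hC⟩ := hbdd
  have hC0 : 0 ≤ C := (opNorm_nonneg' (A 0)).trans (hC 0).1
  have hAn : ∀ t, ‖A t‖ ≤ C := fun t => (norm_le_opNorm _).trans (hC t).1
  have hBn : ∀ t, ‖B t‖ ≤ C := fun t => (norm_le_opNorm _).trans (hC t).2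
  have heigA : ∀ t i, (hA t).isHermitian.eigenvalues i ∈ Set.Icc (0:ℝ) C := fun t i =>
    ⟨(hA t).eigenvalues_nonneg i, (eigenvalues_le_opNorm _ i).trans (hC t).1⟩
  have heigB : ∀ t i, (hB t).isHermitian.eigenvalues i ∈ Set.Icc (0:ℝ) C := fun t i =>
    ⟨(hB t).eigenvalues_nonneg i, (eigenvalues_le_opNorm _ i).trans (hC t).2⟩
  have hfrobeq : ∀ t, frobNorm (A t - B t)
      = Real.sqrt (frob2 (A t - B t)) / Real.sqrt (N t) := by
    intro t
    rw [show frobNorm (A t - B t) = Real.sqrt (frob2 (A t - B t) / (N t)) from rfl,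
      Real.sqrt_div (frob2_nonneg _)]
  -- Step 1: convergence for each monomial.
  have hSk : ∀ k : ℕ, Tendsto (fun t => (1 / (N t : ℝ)) *
      ((∑ i, (hA t).isHermitian.eigenvalues i ^ k) -
        ∑ i, (hB t).isHermitian.eigenvalues i ^ k)) atTop (nhds 0) := by
    intro k
    have hg : Tendsto (fun t => (k * C ^ (k - 1)) * frobNorm (A t - B t)) atTop (nhds 0) := by
      simpa using hAB.const_mul ((k : ℝ) * C ^ (k - 1))
    refine squeeze_zero_norm (fun t => ?_) hg
    by_cases hn : N t = 0
    · have hz : ((N t : ℝ)) = 0 := Nat.cast_eq_zero.mpr hn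
      rw [hz]
      simp only [div_zero, zero_mul, norm_zero]
      have h5 : (0:ℝ) ≤ frobNorm (A t - B t) := Real.sqrt_nonneg _
      positivity
    · have hNpos : (0:ℝ) < (N t : ℝ) := by
        exact_mod_cast Nat.pos_of_ne_zero hn
      have h1 : (∑ i, (hA t).isHermitian.eigenvalues i ^ k) -
          ∑ i, (hB t).isHermitian.eigenvalues i ^ k
          = (((A t ^ k).trace - (B t ^ k).trace)).re := by
        rw [sum_eig_pow (hA t).isHermitian k, sum_eig_pow (hB t).isHermitian k,
          Complex.sub_re]
      rw [norm_mul, h1]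
      have h2 : ‖((A t ^ k).trace - (B t ^ k).trace).re‖
          ≤ ‖(A t ^ k).trace - (B t ^ k).trace‖ := by
        rw [Real.norm_eq_abs]
        exact Complex.abs_re_le_norm _
      have h3 := key (hAn t) (hBn t) hC0 k
      have h4 : ‖(1:ℝ) / (N t : ℝ)‖ = 1 / (N t : ℝ) := by
        rw [Real.norm_eq_abs, abs_of_pos (by positivity)]
      rw [h4]
      calc (1 / (N t : ℝ)) * ‖((A t ^ k).trace - (B t ^ k).trace).re‖
          ≤ (1 / (N t : ℝ)) *
            ((k : ℝ) * C ^ (k - 1) * (Real.sqrt (N t) * Real.sqrt (frob2 (A t - B t)))) := by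
            exact mul_le_mul_of_nonneg_left (h2.trans h3) (by positivity)
        _ = (k : ℝ) * C ^ (k - 1) * frobNorm (A t - B t) := by
            rw [hfrobeq t]
            have hs : Real.sqrt (N t) ≠ 0 := by
              refine ne_of_gt (Real.sqrt_pos.mpr hNpos)
            have hNN : ((N t : ℝ)) = Real.sqrt (N t) * Real.sqrt (N t) :=
              (Real.mul_self_sqrt hNpos.le).symm
            rw [hNN]
            field_simp
            rw [Real.sqrt_sq (Real.sqrt_nonneg _)]
            ring
  -- Step 2: convergence for each polynomial.
  have hpoly : ∀ p : Polynomial ℝ, Tendsto (fun t => (1 / (N t : ℝ)) *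
      ((∑ i, Polynomial.eval ((hA t).isHermitian.eigenvalues i) p) -
        ∑ i, Polynomial.eval ((hB t).isHermitian.eigenvalues i) p)) atTop (nhds 0) := by
    intro p
    have hre : (fun t => (1 / (N t : ℝ)) *
        ((∑ i, Polynomial.eval ((hA t).isHermitian.eigenvalues i) p) -
          ∑ i, Polynomial.eval ((hB t).isHermitian.eigenvalues i) p))
        = fun t => ∑ k ∈ Finset.range (p.natDegree + 1),
            p.coeff k * ((1 / (N t : ℝ)) *
              ((∑ i, (hA t).isHermitian.eigenvalues i ^ k) -
                ∑ i, (hB t).isHermitian.eigenvalues i ^ k)) := by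
      funext t
      have hswap : ∀ (m : ℕ) (f : Fin m → ℝ), ∑ i, Polynomial.eval (f i) p
          = ∑ k ∈ Finset.range (p.natDegree + 1), p.coeff k * ∑ i, f i ^ k := by
        intro m f
        simp_rw [Polynomial.eval_eq_sum_range, Finset.mul_sum]
        rw [Finset.sum_comm]
      rw [hswap _ fun i => (hA t).isHermitian.eigenvalues i,
        hswap _ fun i => (hB t).isHermitian.eigenvalues i,
        ← Finset.sum_sub_distrib, Finset.mul_sum]
      exact Finset.sum_congr rfl fun k _ => by ring
    rw [hre]
    have := tendsto_finset_sum (Finset.range (p.natDegree + 1))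
      (fun k _ => (hSk k).const_mul (p.coeff k))
    simpa using this
  -- Step 3: Weierstrass approximation and the ε/3 argument.
  rw [NormedAddCommGroup.tendsto_nhds_zero]
  intro ε hε
  obtain ⟨p, hp⟩ := exists_polynomial_near_of_continuousOn 0 C ψ
    (hψ.continuousOn) (ε / 3) (by positivity)
  have h1 := (NormedAddCommGroup.tendsto_nhds_zero.mp (hpoly p)) (ε / 3) (by positivity)
  have h2 := hN.eventually_ge_atTop 1
  filter_upwards [h1, h2] with t hg hNt
  have hNpos : (0:ℝ) < (N t : ℝ) := by exact_mod_cast Nat.lt_of_lt_of_le Nat.zero_lt_one hNt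
  have hdecomp : (1 / (N t : ℝ)) *
      ((∑ n, ψ ((hA t).isHermitian.eigenvalues n)) -
        ∑ n, ψ ((hB t).isHermitian.eigenvalues n))
      = (1 / (N t : ℝ)) *
          ((∑ i, Polynomial.eval ((hA t).isHermitian.eigenvalues i) p) -
            ∑ i, Polynomial.eval ((hB t).isHermitian.eigenvalues i) p)
        + (1 / (N t : ℝ)) *
          ((∑ i, (ψ ((hA t).isHermitian.eigenvalues i) -
              Polynomial.eval ((hA t).isHermitian.eigenvalues i) p)) -
            ∑ i, (ψ ((hB t).isHermitian.eigenvalues i) -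
              Polynomial.eval ((hB t).isHermitian.eigenvalues i) p)) := by
    rw [Finset.sum_sub_distrib, Finset.sum_sub_distrib]
    ring
  rw [hdecomp]
  have hkey : ∀ (lam : Fin (N t) → ℝ), (∀ i, lam i ∈ Set.Icc (0:ℝ) C) →
      ‖∑ i, (ψ (lam i) - Polynomial.eval (lam i) p)‖ ≤ (N t : ℝ) * (ε / 3) := by
    intro lam hlam
    refine (norm_sum_le _ _).trans ?_
    have hb : ∀ i, ‖ψ (lam i) - Polynomial.eval (lam i) p‖ ≤ ε / 3 := by
      intro i
      have := hp (lam i) (hlam i)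
      rw [Real.norm_eq_abs, abs_sub_comm]
      exact le_of_lt this
    calc ∑ i, ‖ψ (lam i) - Polynomial.eval (lam i) p‖
        ≤ ∑ _i : Fin (N t), (ε / 3) := Finset.sum_le_sum fun i _ => hb i
      _ = (N t : ℝ) * (ε / 3) := by
          rw [Finset.sum_const, Finset.card_univ, Fintype.card_fin, nsmul_eq_mul]
  have hsecond : ‖(1 / (N t : ℝ)) *
      ((∑ i, (ψ ((hA t).isHermitian.eigenvalues i) -
          Polynomial.eval ((hA t).isHermitian.eigenvalues i) p)) -
        ∑ i, (ψ ((hB t).isHermitian.eigenvalues i) -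
          Polynomial.eval ((hB t).isHermitian.eigenvalues i) p))‖
      ≤ 2 * (ε / 3) := by
    rw [norm_mul, Real.norm_eq_abs (1 / (N t : ℝ)), abs_of_pos (by positivity)]
    have hsub : ‖(∑ i, (ψ ((hA t).isHermitian.eigenvalues i) -
          Polynomial.eval ((hA t).isHermitian.eigenvalues i) p)) -
        ∑ i, (ψ ((hB t).isHermitian.eigenvalues i) -
          Polynomial.eval ((hB t).isHermitian.eigenvalues i) p)‖
        ≤ (N t : ℝ) * (ε / 3) + (N t : ℝ) * (ε / 3) :=
      (norm_sub_le _ _).trans (add_le_add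
        (hkey _ (heigA t)) (hkey _ (heigB t)))
    calc (1 / (N t : ℝ)) * ‖_‖ ≤ (1 / (N t : ℝ)) * ((N t : ℝ) * (ε / 3) + (N t : ℝ) * (ε / 3)) :=
          mul_le_mul_of_nonneg_left hsub (by positivity)
      _ = 2 * (ε / 3) := by field_simp; ring
  calc ‖_ + _‖ ≤ ‖_‖ + ‖_‖ := norm_add_le _ _
    _ < ε / 3 + 2 * (ε / 3) := by
        have := hg
        linarith [hsecond, hg]
    _ = ε := by ring
end

section
/- Let (A_t) and (B_t) be sequences of N_t×N_t positive semidefinite Hermitian complex matrices with N_t → ∞, uniformly bounded operator norms, and normalized Frobenius norm ‖A_t − B_t‖_F → 0 as t → ∞. Then for every γ > 0, (1/N_t) · | log det(I + γ A_t) − log det(I + γ B_t) | → 0 as t → ∞, where I denotes the N_t×N_t identity matrix and the determinants are real and at least one. -/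
open Matrix Filter
open scoped ComplexOrder

namespace LogDetAux

variable {n : ℕ}

lemma smul_psd {M : Matrix (Fin n) (Fin n) ℂ} (hM : M.PosSemidef) {c : ℝ} (hc : 0 ≤ c) :
    ((c : ℂ) • M).PosSemidef := by
  constructor
  · unfold Matrix.IsHermitian
    rw [conjTranspose_smul, hM.1]
    congr 1
    simp
  · intro x
    exact (hM.smul (a := (c : ℂ)) (by exact_mod_cast hc)).2 x

lemma trace_nonneg_of_psd {M : Matrix (Fin n) (Fin n) ℂ} (hM : M.PosSemidef) :
    0 ≤ M.trace := by
  classical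
  have h : M.trace = ∑ i, dotProduct (star (Pi.single i 1)) (M *ᵥ (Pi.single i 1 : Fin n → ℂ)) := by
    apply Finset.sum_congr rfl
    intro i _
    simp [mulVec_single, dotProduct, Pi.single_apply, Matrix.trace]
  rw [h]
  exact Finset.sum_nonneg fun i _ => hM.dotProduct_mulVec_nonneg _

/-- Spectral computation: `det (1 + γ•C)` for Hermitian `C`. -/
lemma det_one_add_smul {C : Matrix (Fin n) (Fin n) ℂ} (hC : C.IsHermitian) (γ : ℝ) :
    Matrix.det (1 + (γ : ℂ) • C) = ((∏ i, (1 + γ * hC.eigenvalues i) : ℝ) : ℂ) := by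
  set U : Matrix (Fin n) (Fin n) ℂ := (hC.eigenvectorUnitary : Matrix (Fin n) (Fin n) ℂ) with hUdef
  set D : Matrix (Fin n) (Fin n) ℂ := diagonal (RCLike.ofReal ∘ hC.eigenvalues) with hDdef
  have hU : U * star U = 1 := Matrix.mem_unitaryGroup_iff.mp hC.eigenvectorUnitary.2
  have hspec : C = U * D * star U := hC.spectral_theorem
  have key : 1 + (γ : ℂ) • C = U * (1 + (γ : ℂ) • D) * star U := by
    rw [mul_add, add_mul, mul_one, hU, Matrix.mul_smul, Matrix.smul_mul, ← hspec]
  rw [key, det_mul, det_mul]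
  have dU : det U * det (star U) = 1 := by rw [← det_mul, hU, det_one]
  have : det U * det (1 + (γ : ℂ) • D) * det (star U)
      = det (1 + (γ : ℂ) • D) * (det U * det (star U)) := by ring
  rw [this, dU, mul_one]
  have h1 : (1 : Matrix (Fin n) (Fin n) ℂ) + (γ : ℂ) • D
      = diagonal (fun i => 1 + (γ : ℂ) * (hC.eigenvalues i : ℂ)) := by
    rw [hDdef, ← diagonal_smul, ← diagonal_one, diagonal_add]
    congr 1
  rw [h1, det_diagonal]
  push_cast
  rfl

lemma trace_hermitian {C : Matrix (Fin n) (Fin n) ℂ} (hC : C.IsHermitian) :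
    C.trace = ((∑ i, hC.eigenvalues i : ℝ) : ℂ) := by
  set U : Matrix (Fin n) (Fin n) ℂ := (hC.eigenvectorUnitary : Matrix (Fin n) (Fin n) ℂ) with hUdef
  set D : Matrix (Fin n) (Fin n) ℂ := diagonal (RCLike.ofReal ∘ hC.eigenvalues) with hDdef
  have hU : star U * U = 1 := Matrix.mem_unitaryGroup_iff'.mp hC.eigenvectorUnitary.2
  have hspec : C = U * D * star U := hC.spectral_theorem
  conv_lhs => rw [hspec]
  rw [Matrix.trace_mul_cycle, hU, one_mul, trace_diagonal]
  push_cast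
  rfl

lemma trace_sq_hermitian {C : Matrix (Fin n) (Fin n) ℂ} (hC : C.IsHermitian) :
    (C * C).trace = ((∑ i, hC.eigenvalues i ^ 2 : ℝ) : ℂ) := by
  set U : Matrix (Fin n) (Fin n) ℂ := (hC.eigenvectorUnitary : Matrix (Fin n) (Fin n) ℂ) with hUdef
  set D : Matrix (Fin n) (Fin n) ℂ := diagonal (RCLike.ofReal ∘ hC.eigenvalues) with hDdef
  have hU : star U * U = 1 := Matrix.mem_unitaryGroup_iff'.mp hC.eigenvectorUnitary.2
  have hspec : C = U * D * star U := hC.spectral_theorem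
  have : C * C = U * (D * D) * star U := by
    conv_lhs => rw [hspec]
    calc U * D * star U * (U * D * star U) = U * (D * ((star U * U) * D)) * star U := by
          simp only [mul_assoc]
    _ = U * (D * D) * star U := by rw [hU, one_mul, mul_assoc]
  rw [this, Matrix.trace_mul_cycle, hU, one_mul, hDdef, diagonal_mul_diagonal,
    trace_diagonal]
  push_cast
  apply Finset.sum_congr rfl
  intro i _
  simp [Function.comp]
  ring

end LogDetAux

namespace LogDetAux

open scoped MatrixOrder

variable {n : ℕ}

lemma det_add_psd {M S : Matrix (Fin n) (Fin n) ℂ} (hM : M.PosDef)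
    (hM1 : (M - 1).PosSemidef) (hS : S.PosSemidef) :
    ∃ T : Matrix (Fin n) (Fin n) ℂ, T.PosSemidef ∧
      Matrix.det (M + S) = Matrix.det M * Matrix.det (1 + T) ∧ T.trace ≤ S.trace := by
  have hdet : IsUnit M.det := (Matrix.isUnit_iff_isUnit_det M).mp hM.isUnit
  have hMinv : M⁻¹.PosSemidef := hM.inv.posSemidef
  set R := CFC.sqrt M⁻¹ with hRdef
  have hRpsd : R.PosSemidef := (CFC.sqrt_nonneg _).posSemidef
  have hR2 : R * R = M⁻¹ := CFC.sqrt_mul_sqrt_self _ hMinv.nonneg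
  have hRH : Rᴴ = R := hRpsd.isHermitian
  have hinvM : M⁻¹ * M = 1 := nonsing_inv_mul M hdet
  have hMinvM : M * M⁻¹ = 1 := mul_nonsing_inv M hdet
  have hcomm : R * M⁻¹ = M⁻¹ * R := by rw [← hR2, mul_assoc]
  have hcommM : R * M = M * R := by
    calc R * M = (M * M⁻¹) * (R * M) := by rw [hMinvM, one_mul]
    _ = M * ((M⁻¹ * R) * M) := by simp only [mul_assoc]
    _ = M * ((R * M⁻¹) * M) := by rw [← hcomm]
    _ = M * (R * (M⁻¹ * M)) := by simp only [mul_assoc]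
    _ = M * R := by rw [hinvM, mul_one]
  have hRMR : R * M * R = 1 := by
    rw [hcommM, mul_assoc, hR2, hMinvM]
  refine ⟨R * S * R, ?_, ?_, ?_⟩
  · simpa [hRH] using hS.conjTranspose_mul_mul_same R
  · have h1 : (1 : Matrix (Fin n) (Fin n) ℂ) + R * S * R = R * (M + S) * R := by
      rw [mul_add, add_mul, hRMR]
    rw [h1, det_mul, det_mul]
    have h2 : det R * det (M + S) * det R = (det R * det R) * det (M + S) := by ring
    rw [h2, ← det_mul, hR2, det_nonsing_inv]
    rw [Ring.inverse_eq_inv', ← mul_assoc, mul_inv_cancel₀ hdet.ne_zero, one_mul]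
  · set W := CFC.sqrt S with hWdef
    have hWpsd : W.PosSemidef := (CFC.sqrt_nonneg _).posSemidef
    have hW2 : W * W = S := CFC.sqrt_mul_sqrt_self _ hS.nonneg
    have hWH : Wᴴ = W := hWpsd.isHermitian
    have htr : (R * S * R).trace = (W * M⁻¹ * W).trace := by
      rw [← hW2]
      calc (R * (W * W) * R).trace = ((R * W) * (W * R)).trace := by simp only [mul_assoc]
      _ = ((W * R) * (R * W)).trace := trace_mul_comm _ _
      _ = (W * (R * R) * W).trace := by simp only [mul_assoc]
      _ = (W * M⁻¹ * W).trace := by rw [hR2]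
    have hkey : R * (M - 1) * R = (1 : Matrix (Fin n) (Fin n) ℂ) - M⁻¹ := by
      rw [mul_sub, sub_mul, hRMR, mul_one, hR2]
    have hpsd2 : ((1 : Matrix (Fin n) (Fin n) ℂ) - M⁻¹).PosSemidef := by
      rw [← hkey]
      simpa [hRH] using hM1.conjTranspose_mul_mul_same R
    have hdiff : S.trace - (R * S * R).trace = (W * (1 - M⁻¹) * W).trace := by
      have : W * (1 - M⁻¹) * W = S - W * M⁻¹ * W := by
        rw [mul_sub, sub_mul, mul_one, hW2]
      rw [this, trace_sub, htr]
    have h0 : 0 ≤ S.trace - (R * S * R).trace := by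
      rw [hdiff]
      have := hpsd2.conjTranspose_mul_mul_same W
      rw [hWH] at this
      exact trace_nonneg_of_psd this
    exact sub_nonneg.mp h0

end LogDetAux

namespace LogDetAux

variable {n : ℕ}

lemma sum_abs_eig_le {X : Matrix (Fin n) (Fin n) ℂ} (hX : X.IsHermitian) :
    ∑ i, |hX.eigenvalues i| ≤ Real.sqrt n * Real.sqrt (∑ i, ∑ j, ‖X i j‖ ^ 2) := by
  have hsq : (∑ i, hX.eigenvalues i ^ 2) = ∑ i, ∑ j, ‖X i j‖ ^ 2 := by
    have h1 : (X * X).trace = ((∑ i, hX.eigenvalues i ^ 2 : ℝ) : ℂ) := trace_sq_hermitian hX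
    have h2 : (X * X).trace = ((∑ i, ∑ j, ‖X i j‖ ^ 2 : ℝ) : ℂ) := by
      rw [Matrix.trace]
      push_cast
      apply Finset.sum_congr rfl
      intro i _
      rw [Matrix.diag_apply, Matrix.mul_apply]
      apply Finset.sum_congr rfl
      intro j _
      calc X i j * X j i = X i j * star (X i j) := by rw [hX.apply j i]
      _ = ((‖X i j‖ : ℝ) : ℂ) ^ 2 := by
          rw [Complex.star_def, Complex.mul_conj, Complex.normSq_eq_norm_sq]
          norm_cast
    exact_mod_cast h1.symm.trans h2
  have cs := Finset.sum_mul_sq_le_sq_mul_sq Finset.univ (fun _ => (1 : ℝ))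
    (fun i => |hX.eigenvalues i|)
  simp only [one_mul, one_pow, Finset.sum_const, Finset.card_univ, Fintype.card_fin,
    nsmul_eq_mul, sq_abs] at cs
  have h3 : ∑ i, |hX.eigenvalues i| ≤ Real.sqrt ((n : ℝ) * ∑ i, hX.eigenvalues i ^ 2) := by
    rw [Real.le_sqrt (Finset.sum_nonneg fun i _ => abs_nonneg _)
      (by positivity)]
    calc (∑ i, |hX.eigenvalues i|) ^ 2 ≤ (n : ℝ) * 1 * ∑ i, hX.eigenvalues i ^ 2 := cs
    _ = (n : ℝ) * ∑ i, hX.eigenvalues i ^ 2 := by ring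
  calc ∑ i, |hX.eigenvalues i| ≤ Real.sqrt ((n : ℝ) * ∑ i, hX.eigenvalues i ^ 2) := h3
  _ = Real.sqrt n * Real.sqrt (∑ i, ∑ j, ‖X i j‖ ^ 2) := by
      rw [Real.sqrt_mul (Nat.cast_nonneg n), hsq]

end LogDetAux

namespace LogDetAux

variable {n : ℕ}

lemma det_one_add_psd_abs {T : Matrix (Fin n) (Fin n) ℂ} (hT : T.PosSemidef) :
    ‖Matrix.det (1 + T)‖ = ∏ i, (1 + hT.1.eigenvalues i) := by
  have h : (1 : Matrix (Fin n) (Fin n) ℂ) + T = 1 + ((1 : ℝ) : ℂ) • T := by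
    norm_num
  rw [h, det_one_add_smul hT.1, Complex.norm_real, Real.norm_eq_abs, abs_of_nonneg]
  · simp
  · exact Finset.prod_nonneg fun i _ => by
      have := hT.eigenvalues_nonneg i
      nlinarith

lemma one_le_det_one_add_psd_abs {T : Matrix (Fin n) (Fin n) ℂ} (hT : T.PosSemidef) :
    1 ≤ ‖Matrix.det (1 + T)‖ := by
  rw [det_one_add_psd_abs hT]
  have h := Finset.prod_le_prod (s := Finset.univ) (f := fun _ : Fin n => (1 : ℝ))
    (g := fun i => 1 + hT.1.eigenvalues i) (fun i _ => zero_le_one)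
    (fun i _ => by linarith [hT.eigenvalues_nonneg i])
  simpa using h

lemma one_side {A B : Matrix (Fin n) (Fin n) ℂ} (hA : A.PosSemidef) (hB : B.PosSemidef)
    {γ : ℝ} (hγ : 0 < γ) :
    Real.log (‖Matrix.det (1 + (γ : ℂ) • A)‖) ≤
      Real.log (‖Matrix.det (1 + (γ : ℂ) • B)‖) +
        γ * (Real.sqrt n * Real.sqrt (∑ i, ∑ j, ‖(A - B) i j‖ ^ 2)) := by
  classical
  have hX : (A - B).IsHermitian := hA.1.sub hB.1
  set μ := hX.eigenvalues with hμdef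
  set U : Matrix (Fin n) (Fin n) ℂ := (hX.eigenvectorUnitary : Matrix (Fin n) (Fin n) ℂ) with hUdef
  have hUU : U * star U = 1 := Matrix.mem_unitaryGroup_iff.mp hX.eigenvectorUnitary.2
  have hUU' : star U * U = 1 := Matrix.mem_unitaryGroup_iff'.mp hX.eigenvectorUnitary.2
  have hspec : A - B = U * diagonal (RCLike.ofReal ∘ μ) * star U := hX.spectral_theorem
  set P : Matrix (Fin n) (Fin n) ℂ :=
    U * diagonal (fun i => ((max (μ i) 0 : ℝ) : ℂ)) * star U with hPdef
  have hP : P.PosSemidef := by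
    have hd : (Matrix.diagonal (fun i => ((max (μ i) 0 : ℝ) : ℂ))).PosSemidef :=
      Matrix.PosSemidef.diagonal fun i => Complex.zero_le_real.mpr (le_max_right _ _)
    rw [hPdef]; simpa [Matrix.star_eq_conjTranspose] using hd.mul_mul_conjTranspose_same U
  have hPX : (P - (A - B)).PosSemidef := by
    have heq : P - (A - B)
        = U * diagonal (fun i => ((max (μ i) 0 - μ i : ℝ) : ℂ)) * star U := by
      rw [hPdef]
      conv_lhs => rw [hspec]
      rw [← Matrix.sub_mul, ← Matrix.mul_sub, Matrix.diagonal_sub]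
      congr 2
      funext i
      push_cast
      simp [Function.comp]
    rw [heq]
    have hd : (Matrix.diagonal (fun i => ((max (μ i) 0 - μ i : ℝ) : ℂ))).PosSemidef :=
      Matrix.PosSemidef.diagonal fun i =>
        Complex.zero_le_real.mpr (by simp [sub_nonneg, le_max_left])
    simpa [Matrix.star_eq_conjTranspose] using hd.mul_mul_conjTranspose_same U
  have hPtr : P.trace = ((∑ i, max (μ i) 0 : ℝ) : ℂ) := by
    rw [hPdef, Matrix.trace_mul_cycle, hUU', one_mul, trace_diagonal]
    push_cast
    rfl
  -- the two positive definite matrices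
  set M₁ : Matrix (Fin n) (Fin n) ℂ := 1 + (γ : ℂ) • A with hM₁def
  set M : Matrix (Fin n) (Fin n) ℂ := 1 + (γ : ℂ) • B with hMdef
  have hM₁ : M₁.PosDef := Matrix.PosDef.one.add_posSemidef (smul_psd hA hγ.le)
  have hM : M.PosDef := Matrix.PosDef.one.add_posSemidef (smul_psd hB hγ.le)
  have hM₁1 : (M₁ - 1).PosSemidef := by
    rw [hM₁def, add_sub_cancel_left]; exact smul_psd hA hγ.le
  have hM1 : (M - 1).PosSemidef := by
    rw [hMdef, add_sub_cancel_left]; exact smul_psd hB hγ.le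
  have hS₁ : ((γ : ℂ) • (P - (A - B))).PosSemidef := smul_psd hPX hγ.le
  have hS : ((γ : ℂ) • P).PosSemidef := smul_psd hP hγ.le
  have hMsum : M₁ + (γ : ℂ) • (P - (A - B)) = M + (γ : ℂ) • P := by
    rw [hM₁def, hMdef, smul_sub, smul_sub]
    abel
  obtain ⟨T₁, hT₁, e₁, -⟩ := det_add_psd hM₁ hM₁1 hS₁
  obtain ⟨T, hT, e, htr⟩ := det_add_psd hM hM1 hS
  rw [hMsum] at e₁
  -- combine determinant identities
  have habs : ‖M₁.det‖ * ‖Matrix.det (1 + T₁)‖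
      = ‖M.det‖ * ‖Matrix.det (1 + T)‖ := by
    rw [← norm_mul, ← norm_mul, ← e₁, ← e]
  -- bound on abs det (1 + T)
  have htr' : ∑ i, hT.1.eigenvalues i ≤ γ * ∑ i, max (μ i) 0 := by
    have h1 : T.trace = ((∑ i, hT.1.eigenvalues i : ℝ) : ℂ) := trace_hermitian hT.1
    have h2 : ((γ : ℂ) • P).trace = ((γ * ∑ i, max (μ i) 0 : ℝ) : ℂ) := by
      rw [Matrix.trace_smul, hPtr]
      push_cast
      simp [smul_eq_mul]
    rw [h1, h2] at htr
    exact_mod_cast htr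
  have hTbound : ‖Matrix.det (1 + T)‖ ≤ Real.exp (γ * ∑ i, max (μ i) 0) := by
    rw [det_one_add_psd_abs hT]
    calc ∏ i, (1 + hT.1.eigenvalues i) ≤ ∏ i, Real.exp (hT.1.eigenvalues i) :=
          Finset.prod_le_prod (fun i _ => by have := hT.eigenvalues_nonneg i; linarith)
            (fun i _ => by linarith [Real.add_one_le_exp (hT.1.eigenvalues i)])
    _ = Real.exp (∑ i, hT.1.eigenvalues i) := by rw [Real.exp_sum]
    _ ≤ Real.exp (γ * ∑ i, max (μ i) 0) := Real.exp_le_exp.mpr htr'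
  -- put it together
  have hdM₁ : 1 ≤ ‖M₁.det‖ := by
    rw [hM₁def]; exact one_le_det_one_add_psd_abs (smul_psd hA hγ.le)
  have hdM : 1 ≤ ‖M.det‖ := by
    rw [hMdef]; exact one_le_det_one_add_psd_abs (smul_psd hB hγ.le)
  have hmain : ‖M₁.det‖ ≤ ‖M.det‖ * Real.exp (γ * ∑ i, max (μ i) 0) := by
    calc ‖M₁.det‖ ≤ ‖M₁.det‖ * ‖Matrix.det (1 + T₁)‖ :=
          le_mul_of_one_le_right (norm_nonneg _) (one_le_det_one_add_psd_abs hT₁)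
    _ = ‖M.det‖ * ‖Matrix.det (1 + T)‖ := habs
    _ ≤ ‖M.det‖ * Real.exp (γ * ∑ i, max (μ i) 0) :=
          mul_le_mul_of_nonneg_left hTbound (norm_nonneg _)
  have hlog : Real.log (‖M₁.det‖)
      ≤ Real.log (‖M.det‖) + γ * ∑ i, max (μ i) 0 := by
    calc Real.log (‖M₁.det‖)
        ≤ Real.log (‖M.det‖ * Real.exp (γ * ∑ i, max (μ i) 0)) :=
          Real.log_le_log (by linarith) hmain
    _ = Real.log (‖M.det‖) + γ * ∑ i, max (μ i) 0 := by
          rw [Real.log_mul (by linarith) (Real.exp_ne_zero _), Real.log_exp]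
  have hsum : ∑ i, max (μ i) 0 ≤ Real.sqrt n * Real.sqrt (∑ i, ∑ j, ‖(A - B) i j‖ ^ 2) := by
    calc ∑ i, max (μ i) 0 ≤ ∑ i, |μ i| :=
          Finset.sum_le_sum fun i _ => max_le (le_abs_self _) (abs_nonneg _)
    _ ≤ Real.sqrt n * Real.sqrt (∑ i, ∑ j, ‖(A - B) i j‖ ^ 2) := sum_abs_eig_le hX
  calc Real.log (‖M₁.det‖) ≤ Real.log (‖M.det‖) + γ * ∑ i, max (μ i) 0 :=
        hlog
  _ ≤ Real.log (‖M.det‖)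
      + γ * (Real.sqrt n * Real.sqrt (∑ i, ∑ j, ‖(A - B) i j‖ ^ 2)) := by
        have := mul_le_mul_of_nonneg_left hsum hγ.le
        linarith

end LogDetAux


/-- For sequences `(A_t)`, `(B_t)` of `N_t×N_t` positive
semidefinite Hermitian matrices with `N_t → ∞`, uniformly bounded operator
norms, and `‖A_t − B_t‖_F → 0`, the normalized log-determinant difference
`(1/N_t)·|log det(I + γ A_t) − log det(I + γ B_t)| → 0` for every `γ > 0`.
(The determinants are real and at least one, so we may take the real logarithm
of their absolute values.) -/
theorem normalized_logdet_difference_tendsto_zero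
    (N : ℕ → ℕ) (hN : Tendsto (fun t => N t) atTop atTop)
    (A B : ∀ t, Matrix (Fin (N t)) (Fin (N t)) ℂ)
    (hA : ∀ t, (A t).PosSemidef) (hB : ∀ t, (B t).PosSemidef)
    (hbdd : ∃ C : ℝ, ∀ t, opNorm (A t) ≤ C ∧ opNorm (B t) ≤ C)
    (hAB : Tendsto (fun t => frobNorm (A t - B t)) atTop (nhds 0))
    (γ : ℝ) (hγ : 0 < γ) :
    Tendsto (fun t => (1 / (N t : ℝ)) *
        |Real.log ‖Matrix.det (1 + (γ : ℂ) • A t)‖ -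
          Real.log ‖Matrix.det (1 + (γ : ℂ) • B t)‖|)
      atTop (nhds 0) := by
  have key : ∀ t, (1 / (N t : ℝ)) *
      |Real.log (‖Matrix.det (1 + (γ : ℂ) • A t)‖) -
        Real.log (‖Matrix.det (1 + (γ : ℂ) • B t)‖)|
      ≤ γ * frobNorm (A t - B t) := by
    intro t
    set n := N t with hndef
    set s : ℝ := ∑ i, ∑ j, ‖(A t - B t) i j‖ ^ 2 with hsdef
    have hs0 : 0 ≤ s := Finset.sum_nonneg fun i _ => Finset.sum_nonneg fun j _ => sq_nonneg _
    have hsBA : (∑ i, ∑ j, ‖(B t - A t) i j‖ ^ 2) = s := by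
      apply Finset.sum_congr rfl
      intro i _
      apply Finset.sum_congr rfl
      intro j _
      rw [Matrix.sub_apply, Matrix.sub_apply, norm_sub_rev]
    have h1 := LogDetAux.one_side (hA t) (hB t) hγ
    have h2 := LogDetAux.one_side (hB t) (hA t) hγ
    rw [hsBA] at h2
    have habs : |Real.log (‖Matrix.det (1 + (γ : ℂ) • A t)‖) -
        Real.log (‖Matrix.det (1 + (γ : ℂ) • B t)‖)|
        ≤ γ * (Real.sqrt n * Real.sqrt s) := by
      rw [abs_sub_le_iff]
      constructor
      · linarith
      · linarith
    have hfrob : frobNorm (A t - B t) = Real.sqrt s / Real.sqrt n := by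
      rw [frobNorm, Real.sqrt_div hs0]
    rcases Nat.eq_zero_or_pos n with hn | hn
    · have hz : Real.sqrt (n : ℝ) = 0 := by rw [hn]; simp
      have : γ * (Real.sqrt n * Real.sqrt s) = 0 := by rw [hz]; ring
      have habs0 : |Real.log (‖Matrix.det (1 + (γ : ℂ) • A t)‖) -
          Real.log (‖Matrix.det (1 + (γ : ℂ) • B t)‖)| ≤ 0 := this ▸ habs
      have h0 : (0:ℝ) ≤ γ * frobNorm (A t - B t) :=
        mul_nonneg hγ.le (Real.sqrt_nonneg _)
      calc (1 / (n : ℝ)) * |Real.log (‖Matrix.det (1 + (γ : ℂ) • A t)‖) -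
            Real.log (‖Matrix.det (1 + (γ : ℂ) • B t)‖)|
          ≤ (1 / (n : ℝ)) * 0 := by
            apply mul_le_mul_of_nonneg_left habs0 (by positivity)
      _ = 0 := by ring
      _ ≤ γ * frobNorm (A t - B t) := h0
    · have hn' : (0:ℝ) < n := by exact_mod_cast hn
      have hsqn : (0:ℝ) < Real.sqrt n := Real.sqrt_pos.mpr hn'
      have heq : (1 / (n : ℝ)) * (γ * (Real.sqrt n * Real.sqrt s))
          = γ * (Real.sqrt s / Real.sqrt n) := by
        have hss : Real.sqrt (n:ℝ) * Real.sqrt (n:ℝ) = (n : ℝ) :=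
          Real.mul_self_sqrt hn'.le
        field_simp
        nlinarith [hss, Real.sq_sqrt hn'.le, Real.sqrt_nonneg s]
      calc (1 / (n : ℝ)) * |Real.log (‖Matrix.det (1 + (γ : ℂ) • A t)‖) -
            Real.log (‖Matrix.det (1 + (γ : ℂ) • B t)‖)|
          ≤ (1 / (n : ℝ)) * (γ * (Real.sqrt n * Real.sqrt s)) := by
            apply mul_le_mul_of_nonneg_left habs (by positivity)
      _ = γ * (Real.sqrt s / Real.sqrt n) := heq
      _ = γ * frobNorm (A t - B t) := by rw [hfrob]
  have hg : Tendsto (fun t => γ * frobNorm (A t - B t)) atTop (nhds 0) := by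
    have := hAB.const_mul γ
    simpa using this
  exact squeeze_zero (fun t => mul_nonneg (by positivity) (abs_nonneg _)) key hg
end
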